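/- arXiv:2506.03343 — 11 statements merged into one kernel-verified Lean document; each statement's English description precedes it below -/
import Mathlib

section
/- Let M be a monoid presented by generators S (a finite set) and homogeneous relations R (each relation equates two words of equal length over S), such that for each generator s ∈ S, at most one word appearing in the relations of R begins with s. Then M is left-cancellative: for all a, b, c ∈ M, if a·b = a·c then b = c. -/
namespace Stmt0Aux

variable {α : Type*}

section defs

variable (R : List α → List α → Prop)

/-- One rewriting step: replace a factor `w` by `w'` where `R w w'` or `R w' w`. -/
def Step (x y : List α) : Prop :=
  ∃ p w w' q, (R w w' ∨ R w' w) ∧ x = p ++ w ++ q ∧ y = p ++ w' ++ q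

/-- Chains of rewriting steps. -/
def Chain : List α → List α → Prop := Relation.ReflTransGen (Step R)

/-- `w` is a word appearing in the relations. -/
def IsRel (w : List α) : Prop := ∃ u, R w u ∨ R u w

/-- The key invariant. -/
def Inv (x y : List α) : Prop :=
  (x = [] ∧ y = []) ∨
  ∃ a ta b tb, x = a :: ta ∧ y = b :: tb ∧
    ((a = b ∧ Chain R ta tb) ∨
      ∃ ra rb q, IsRel R (a :: ra) ∧ IsRel R (b :: rb) ∧
        Chain R ta (ra ++ q) ∧ Chain R tb (rb ++ q))

end defs

variable {R : List α → List α → Prop}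

lemma Step.symm {x y : List α} (h : Step R x y) : Step R y x := by
  obtain ⟨p, w, w', q, hr, hx, hy⟩ := h
  exact ⟨p, w', w, q, hr.symm, hy, hx⟩

lemma Chain.refl (x : List α) : Chain R x x := Relation.ReflTransGen.refl

lemma Chain.trans {x y z : List α} (h1 : Chain R x y) (h2 : Chain R y z) : Chain R x z :=
  Relation.ReflTransGen.trans h1 h2

lemma Chain.single {x y : List α} (h : Step R x y) : Chain R x y :=
  Relation.ReflTransGen.single h

lemma Chain.symm {x y : List α} (h : Chain R x y) : Chain R y x := by
  induction h with
  | refl => exact Chain.refl _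
  | tail _ hstep ih => exact (Chain.single hstep.symm).trans ih

lemma Step.append_left (p : List α) {x y : List α} (h : Step R x y) :
    Step R (p ++ x) (p ++ y) := by
  obtain ⟨u, w, w', q, hr, hx, hy⟩ := h
  exact ⟨p ++ u, w, w', q, hr, by simp [hx], by simp [hy]⟩

lemma Step.append_right (q : List α) {x y : List α} (h : Step R x y) :
    Step R (x ++ q) (y ++ q) := by
  obtain ⟨u, w, w', q', hr, hx, hy⟩ := h
  exact ⟨u, w, w', q' ++ q, hr, by simp [hx], by simp [hy]⟩

lemma Chain.append_left (p : List α) {x y : List α} (h : Chain R x y) :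
    Chain R (p ++ x) (p ++ y) :=
  Relation.ReflTransGen.lift (fun l => p ++ l) (fun _ _ h => h.append_left p) _ _ h

lemma Chain.append_right (q : List α) {x y : List α} (h : Chain R x y) :
    Chain R (x ++ q) (y ++ q) :=
  Relation.ReflTransGen.lift (fun l => l ++ q) (fun _ _ h => h.append_right q) _ _ h

lemma Chain.append {a b c d : List α} (h1 : Chain R a b) (h2 : Chain R c d) :
    Chain R (a ++ c) (b ++ d) :=
  (h1.append_right c).trans (h2.append_left b)

section homog

variable (hhom : ∀ w w', R w w' → w.length = w'.length)

include hhom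

lemma Step.length_eq {x y : List α} (h : Step R x y) : x.length = y.length := by
  obtain ⟨p, w, w', q, hr, hx, hy⟩ := h
  have : w.length = w'.length := hr.elim (hhom _ _) (fun h => (hhom _ _ h).symm)
  subst hx; subst hy; simp [this]

lemma Chain.length_eq {x y : List α} (h : Chain R x y) : x.length = y.length := by
  induction h with
  | refl => rfl
  | tail _ hstep ih => exact ih.trans (hstep.length_eq hhom)

variable (hstart : ∀ (s : α) (w₁ w₂ : List α), IsRel R w₁ → IsRel R w₂ →
    w₁.head? = some s → w₂.head? = some s → w₁ = w₂)

include hstart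

/-- Main lemma: any chain satisfies the invariant. -/
lemma inv_of_chain_aux : ∀ n, ∀ x y : List α, x.length = n → Chain R x y → Inv R x y := by
  intro n
  induction n using Nat.strong_induction_on with
  | _ n IH =>
  -- cancellation of one letter, at smaller lengths
  have hletter : ∀ m, m < n → ∀ (s : α) (u v : List α), (s :: u).length = m →
      Chain R (s :: u) (s :: v) → Chain R u v := by
    intro m hm s u v hlen h
    rcases IH m hm _ _ hlen h with ⟨h1, _⟩ | ⟨a, ta, b, tb, hx, hy, hcase⟩
    · simp at h1
    · injection hx with e1 e2; subst e1; subst e2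
      injection hy with e3 e4; subst e3; subst e4
      rcases hcase with ⟨_, hch⟩ | ⟨ra, rb, q, hRa, hRb, hca, hcb⟩
      · exact hch
      · have he : (s :: ra) = (s :: rb) := hstart s _ _ hRa hRb rfl rfl
        injection he with _ e5
        rw [← e5] at hcb
        exact hca.trans hcb.symm
  -- cancellation of a word, at smaller lengths
  have hword : ∀ (p u v : List α), (p ++ u).length < n →
      Chain R (p ++ u) (p ++ v) → Chain R u v := by
    intro p
    induction p with
    | nil => intro u v _ h; simpa using h
    | cons s p ih =>
      intro u v hlen h
      have h' : Chain R (p ++ u) (p ++ v) :=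
        hletter _ hlen s (p ++ u) (p ++ v) rfl h
      exact ih u v (by simp at hlen ⊢; omega) h'
  intro x y hxlen hchain
  induction hchain with
  | refl =>
    cases x with
    | nil => exact Or.inl ⟨rfl, rfl⟩
    | cons a ta => exact Or.inr ⟨a, ta, a, ta, rfl, rfl, Or.inl ⟨rfl, Chain.refl _⟩⟩
  | @tail b c hxb hbc ih =>
    have hblen : b.length = n := by rw [← Chain.length_eq hhom hxb]; exact hxlen
    obtain ⟨P, w, w', Q, hr, hb, hc⟩ := hbc
    have hww' : w.length = w'.length := hr.elim (hhom _ _) (fun h => (hhom _ _ h).symm)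
    cases w with
    | nil =>
      have hw' : w' = [] := List.length_eq_zero_iff.mp (by simpa using hww'.symm)
      subst hw'
      have : c = b := by rw [hc, hb]
      rw [this]; exact ih
    | cons wc rc =>
      cases w' with
      | nil => simp at hww'
      | cons wd rd =>
        cases P with
        | cons p₀ P' =>
          have hstep' : Step R (P' ++ (wc :: rc) ++ Q) (P' ++ (wd :: rd) ++ Q) :=
            ⟨P', _, _, Q, hr, rfl, rfl⟩
          rcases ih with ⟨_, hb0⟩ | ⟨a, ta, b₀, tb, hxe, hbe, hcase⟩
          · rw [hb0] at hb; simp at hb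
          · rw [hb] at hbe
            have hbe' : p₀ :: (P' ++ (wc :: rc) ++ Q) = b₀ :: tb := hbe
            injection hbe' with e1 e2
            subst e1; subst e2
            rcases hcase with ⟨e3, hch⟩ | ⟨ra, rb, q, hRa, hRb, hca, hcb⟩
            · exact Or.inr ⟨a, ta, p₀, P' ++ (wd :: rd) ++ Q, hxe, by simp [hc],
                Or.inl ⟨e3, hch.trans (Chain.single hstep')⟩⟩
            · exact Or.inr ⟨a, ta, p₀, P' ++ (wd :: rd) ++ Q, hxe, by simp [hc],
                Or.inr ⟨ra, rb, q, hRa, hRb, hca,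
                  ((Chain.single hstep').symm).trans hcb⟩⟩
        | nil =>
          have hRw : IsRel R (wc :: rc) := ⟨_, hr⟩
          have hRw' : IsRel R (wd :: rd) := ⟨_, hr.symm⟩
          rcases ih with ⟨_, hb0⟩ | ⟨a, ta, b₀, tb, hxe, hbe, hcase⟩
          · rw [hb0] at hb; simp at hb
          · rw [hb] at hbe
            have hbe' : wc :: (rc ++ Q) = b₀ :: tb := hbe
            injection hbe' with e1 e2
            subst e1; subst e2
            rcases hcase with ⟨e3, hch⟩ | ⟨ra, rb, q, hRa, hRb, hca, hcb⟩
            · refine Or.inr ⟨a, ta, wd, rd ++ Q, hxe, by simp [hc], Or.inr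
                ⟨rc, rd, Q, ?_, hRw', hch, Chain.refl _⟩⟩
              rw [e3]; exact hRw
            · have he : (wc :: rb) = (wc :: rc) := hstart wc _ _ hRb hRw rfl rfl
              injection he with _ e4
              rw [e4] at hcb
              have hlt : (rc ++ Q).length < n := by
                rw [hb] at hblen; simp at hblen ⊢; omega
              have hQq : Chain R Q q := hword rc Q q hlt hcb
              have hta : Chain R ta (ra ++ Q) := hca.trans (hQq.symm.append_left ra)
              exact Or.inr ⟨a, ta, wd, rd ++ Q, hxe, by simp [hc],
                Or.inr ⟨ra, rd, Q, hRa, hRw', hta, Chain.refl _⟩⟩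

lemma cancel_letter {s : α} {u v : List α} (h : Chain R (s :: u) (s :: v)) :
    Chain R u v := by
  rcases inv_of_chain_aux hhom hstart (s :: u).length _ _ rfl h with
    ⟨h1, _⟩ | ⟨a, ta, b, tb, hx, hy, hcase⟩
  · simp at h1
  · injection hx with e1 e2; subst e1; subst e2
    injection hy with e3 e4; subst e3; subst e4
    rcases hcase with ⟨_, hch⟩ | ⟨ra, rb, q, hRa, hRb, hca, hcb⟩
    · exact hch
    · have he : (s :: ra) = (s :: rb) := hstart s _ _ hRa hRb rfl rfl
      injection he with _ e5
      rw [← e5] at hcb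
      exact hca.trans hcb.symm

lemma cancel_word (p : List α) {u v : List α} (h : Chain R (p ++ u) (p ++ v)) :
    Chain R u v := by
  induction p with
  | nil => simpa using h
  | cons s p ih => exact ih (cancel_letter hhom hstart h)

end homog

end Stmt0Aux

open Stmt0Aux FreeMonoid in
/-- A homogeneously presented monoid in which, for each generator `s`, at most one word
appearing in the relations begins with `s`, is left-cancellative. -/
theorem stmt0 {α : Type*} [Fintype α]
    (R : FreeMonoid α → FreeMonoid α → Prop)
    (hhom : ∀ w w', R w w' → w.toList.length = w'.toList.length)
    (hstart : ∀ (s : α) (w₁ w₂ : FreeMonoid α),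
      (∃ u, R w₁ u ∨ R u w₁) → (∃ u, R w₂ u ∨ R u w₂) →
      w₁.toList.head? = some s → w₂.toList.head? = some s → w₁ = w₂)
    (c : Con (FreeMonoid α)) (hc : c = conGen R) :
    ∀ a b d : c.Quotient, a * b = a * d → b = d := by
  subst hc
  -- list-level relation
  set R' : List α → List α → Prop := fun l l' => R (ofList l) (ofList l') with hR'
  have hhom' : ∀ w w', R' w w' → w.length = w'.length := fun w w' h => hhom _ _ h
  have hstart' : ∀ (s : α) (w₁ w₂ : List α), IsRel R' w₁ → IsRel R' w₂ →
      w₁.head? = some s → w₂.head? = some s → w₁ = w₂ := by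
    intro s w₁ w₂ h1 h2 hh1 hh2
    obtain ⟨u₁, hu₁⟩ := h1
    obtain ⟨u₂, hu₂⟩ := h2
    exact hstart s (ofList w₁) (ofList w₂) ⟨ofList u₁, hu₁⟩ ⟨ofList u₂, hu₂⟩ hh1 hh2
  -- conGen implies chain
  have hfwd : ∀ x y : FreeMonoid α, ConGen.Rel R x y → Chain R' x.toList y.toList := by
    intro x y h
    induction h with
    | of x y hxy => exact Chain.single ⟨[], x.toList, y.toList, [], Or.inl hxy, by simp, by simp⟩
    | refl x => exact Chain.refl _
    | symm _ ih => exact ih.symm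
    | trans _ _ ih1 ih2 => exact ih1.trans ih2
    | mul _ _ ih1 ih2 => exact ih1.append ih2
  -- chain implies conGen
  have hbwd : ∀ x y : List α, Chain R' x y → ConGen.Rel R (ofList x) (ofList y) := by
    intro x y h
    induction h with
    | refl => exact ConGen.Rel.refl _
    | tail _ hstep ih =>
      obtain ⟨p, w, w', q, hr, hx, hy⟩ := hstep
      subst hx; subst hy
      refine ih.trans ?_
      rw [ofList_append, ofList_append, ofList_append, ofList_append]
      refine ConGen.Rel.mul (ConGen.Rel.mul (ConGen.Rel.refl _) ?_) (ConGen.Rel.refl _)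
      rcases hr with hr | hr
      · simp only [hR'] at hr
        exact ConGen.Rel.of _ _ hr
      · simp only [hR'] at hr
        exact (ConGen.Rel.of _ _ hr).symm
  intro a b d
  induction a using Con.induction_on with | H x => ?_
  induction b using Con.induction_on with | H u => ?_
  induction d using Con.induction_on with | H v => ?_
  intro hab
  rw [← Con.coe_mul, ← Con.coe_mul] at hab
  have h1 : (conGen R) (x * u) (x * v) := (Con.eq _).mp hab
  have h2 : Chain R' (x.toList ++ u.toList) (x.toList ++ v.toList) := by
    have := hfwd _ _ h1
    simpa [toList_mul] using this
  have h3 : Chain R' u.toList v.toList := cancel_word hhom' hstart' _ h2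
  have h4 : ConGen.Rel R u v := by simpa [ofList_toList] using hbwd _ _ h3
  exact (Con.eq _).mpr h4
end

section
/- Let L be a finite graded lattice with no nontrivial automorphisms, and let 𝓛 be a finite-type ℕ-graded upho lattice such that for every x ∈ 𝓛, letting y_1,…,y_k be the covers of x, the interval [x, y_1 ∨ ⋯ ∨ y_k] is isomorphic to L. Then 𝓛 has no nontrivial automorphisms. -/
/-- If a finite graded lattice `L` has no nontrivial automorphisms, then any finite-type
ℕ-graded upho lattice `𝓛` whose core (the interval from any element to the join of its
covers) is isomorphic to `L` has no nontrivial automorphisms. -/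
theorem stmt6 {L : Type*} [Lattice L] [BoundedOrder L] [Fintype L]
    (gL : L → ℕ) (hgL0 : gL ⊥ = 0) (hgLcov : ∀ x y : L, x ⋖ y → gL y = gL x + 1)
    (hLrigid : ∀ f : L ≃o L, ∀ x, f x = x)
    {P : Type*} [Lattice P] [OrderBot P]
    (ρ : P → ℕ) (hρ0 : ρ ⊥ = 0) (hρcov : ∀ x y : P, x ⋖ y → ρ y = ρ x + 1)
    (hdown : ∀ x : P, x ≠ ⊥ → ∃ y, y ⋖ x)
    (hfin : ∀ i : ℕ, {x : P | ρ x = i}.Finite)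
    (hupho : ∀ p : P, Nonempty ({q : P // p ≤ q} ≃o P))
    (hcore : ∀ x : P, ∃ m : P, IsLUB {y | x ⋖ y} m ∧ Nonempty (Set.Icc x m ≃o L)) :
    ∀ f : P ≃o P, ∀ x, f x = x := by
  intro f
  have key : ∀ x : P, f x = x → ∀ y, x ⋖ y → f y = y := by
    intro x hx y hxy
    obtain ⟨m, hm, ⟨φ⟩⟩ := hcore x
    have hset : f '' {y : P | x ⋖ y} = {y : P | x ⋖ y} := by
      ext z
      constructor
      · rintro ⟨w, hw, rfl⟩
        have : f x ⋖ f w := (apply_covBy_apply_iff f).2 hw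
        rwa [hx] at this
      · intro hz
        refine ⟨f.symm z, ?_, f.apply_symm_apply z⟩
        have : f.symm x ⋖ f.symm z := (apply_covBy_apply_iff f.symm).2 hz
        have hxs : f.symm x = x := f.symm_apply_eq.2 hx.symm
        rwa [hxs] at this
    have hfm : f m = m := by
      have h1 : IsLUB (f '' {y : P | x ⋖ y}) (f m) := f.isLUB_image'.2 hm
      rw [hset] at h1
      exact h1.unique hm
    have hxs : f.symm x = x := f.symm_apply_eq.2 hx.symm
    have hms : f.symm m = m := f.symm_apply_eq.2 hfm.symm
    have hmem : ∀ z : P, z ∈ Set.Icc x m → f z ∈ Set.Icc x m := by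
      rintro z ⟨h1, h2⟩
      exact ⟨hx ▸ f.monotone h1, hfm ▸ f.monotone h2⟩
    have hmem' : ∀ z : P, z ∈ Set.Icc x m → f.symm z ∈ Set.Icc x m := by
      rintro z ⟨h1, h2⟩
      exact ⟨hxs ▸ f.symm.monotone h1, hms ▸ f.symm.monotone h2⟩
    let g : Set.Icc x m ≃o Set.Icc x m :=
      { toFun := fun z => ⟨f z, hmem z z.2⟩
        invFun := fun z => ⟨f.symm z, hmem' z z.2⟩
        left_inv := fun z => by simp
        right_inv := fun z => by simp
        map_rel_iff' := by intro a b; exact f.le_iff_le }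
    have hg := hLrigid ((φ.symm.trans g).trans φ)
    have hy : y ∈ Set.Icc x m := ⟨hxy.le, hm.1 hxy⟩
    have := hg (φ ⟨y, hy⟩)
    simp only [OrderIso.trans_apply, OrderIso.symm_apply_apply] at this
    have hgy : g ⟨y, hy⟩ = ⟨y, hy⟩ := φ.injective this
    exact congrArg Subtype.val hgy
  suffices h : ∀ n, ∀ y : P, ρ y = n → f y = y by
    intro y; exact h (ρ y) y rfl
  intro n
  induction n with
  | zero =>
    intro y hy
    have hyb : y = ⊥ := by
      by_contra h
      obtain ⟨z, hz⟩ := hdown y h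
      have := hρcov z y hz
      omega
    subst hyb
    exact f.map_bot
  | succ n ih =>
    intro y hy
    have hyb : y ≠ ⊥ := by
      intro h; rw [h, hρ0] at hy; omega
    obtain ⟨z, hz⟩ := hdown y hyb
    have hρz : ρ z = n := by have := hρcov z y hz; omega
    exact key z (ih z hρz) y hz
end

section
/- Let 𝓟 be a finite-type ℕ-graded upho poset with no nontrivial automorphisms. Then any system of isomorphisms φ_p : V_p → 𝓟 (one for each p ∈ 𝓟) is automatically compatible, i.e., φ_q = φ_{φ_p(q)} ∘ (φ_p restricted to V_q) for all p ≤ q ∈ 𝓟. -/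
/-- In a finite-type ℕ-graded upho poset with no nontrivial automorphisms, any system
of isomorphisms `φ_p : V_p → P` is automatically compatible. -/
theorem stmt7 {P : Type*} [PartialOrder P] [OrderBot P]
    (ρ : P → ℕ) (hρ0 : ρ ⊥ = 0) (hcov : ∀ x y : P, x ⋖ y → ρ y = ρ x + 1)
    (hfin : ∀ i : ℕ, {x : P | ρ x = i}.Finite)
    (hrigid : ∀ f : P ≃o P, ∀ x, f x = x)
    (φ : ∀ p : P, {q : P // p ≤ q} ≃o P) :
    ∀ (p q : P) (hpq : p ≤ q) (r : {x : P // q ≤ x}),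
      φ q r = φ ((φ p) ⟨q, hpq⟩)
        ⟨(φ p) ⟨r.1, hpq.trans r.2⟩,
          (φ p).le_iff_le.mpr (Subtype.mk_le_mk.mpr r.2)⟩ := by
  intro p q hpq r
  set a : P := (φ p) ⟨q, hpq⟩ with ha
  -- restriction of φ p to V_q, as an iso V_q ≃o V_a
  have hsymm : ∀ y : {y : P // a ≤ y}, q ≤ ((φ p).symm y.1).1 := by
    intro y
    have h1 : (φ p).symm a ≤ (φ p).symm y.1 := (φ p).symm.le_iff_le.mpr y.2
    have h3 : (φ p).symm a = ⟨q, hpq⟩ := (φ p).symm_apply_apply _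
    rw [h3] at h1
    exact h1
  let e : {x : P // q ≤ x} ≃o {y : P // a ≤ y} :=
    { toFun := fun x => ⟨(φ p) ⟨x.1, hpq.trans x.2⟩,
        (φ p).le_iff_le.mpr (Subtype.mk_le_mk.mpr x.2)⟩
      invFun := fun y => ⟨((φ p).symm y.1).1, hsymm y⟩
      left_inv := by
        intro x
        ext
        simp
      right_inv := by
        intro y
        ext
        simp
      map_rel_iff' := by
        intro x y
        simp [Subtype.mk_le_mk, ← Subtype.coe_le_coe] }
  let ψ : P ≃o P := (φ q).symm.trans (e.trans (φ a))
  have h := hrigid ψ ((φ q) r)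
  have h2 : ψ ((φ q) r) = (φ a) (e r) := by
    simp [ψ]
  rw [h2] at h
  exact h.symm
end

section
/- Fix n ≥ 2 and a function f : [n] → [n]. In the monoid M(f) = ⟨s_1,…,s_n ∣ s_1 s_{f(1)} = s_2 s_{f(2)} = ⋯ = s_n s_{f(n)}⟩, M(f) is left-cancellative. -/
namespace Stmt8Aux

variable {n : ℕ} (f : Fin n → Fin n)

/-- One rewriting step: replace a factor `i (f i)` by `j (f j)`. -/
def Step (u v : List (Fin n)) : Prop :=
  ∃ (x y : List (Fin n)) (i j : Fin n), u = x ++ i :: f i :: y ∧ v = x ++ j :: f j :: y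

/-- Reflexive transitive closure of `Step`. -/
def R (u v : List (Fin n)) : Prop := Relation.ReflTransGen (Step f) u v

lemma Step.symm {u v : List (Fin n)} (h : Step f u v) : Step f v u := by
  obtain ⟨x, y, i, j, hu, hv⟩ := h
  exact ⟨x, y, j, i, hv, hu⟩

lemma R.refl (u : List (Fin n)) : R f u u := Relation.ReflTransGen.refl

lemma R.trans {u v w : List (Fin n)} (h : R f u v) (h' : R f v w) : R f u w :=
  Relation.ReflTransGen.trans h h'

lemma R.single {u v : List (Fin n)} (h : Step f u v) : R f u v :=
  Relation.ReflTransGen.single h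

lemma R.symm {u v : List (Fin n)} (h : R f u v) : R f v u := by
  induction h with
  | refl => exact R.refl f u
  | tail _ h ih => exact Relation.ReflTransGen.trans (R.single f (Step.symm f h)) ih

lemma R.cons {u v : List (Fin n)} (a : Fin n) (h : R f u v) : R f (a :: u) (a :: v) := by
  refine Relation.ReflTransGen.lift (a :: ·) ?_ _ _ h
  rintro b c ⟨x, y, i, j, hb, hc⟩
  exact ⟨a :: x, y, i, j, by simp [hb], by simp [hc]⟩

lemma R.append_left {u v : List (Fin n)} (x : List (Fin n)) (h : R f u v) :
    R f (x ++ u) (x ++ v) := by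
  induction x with
  | nil => simpa using h
  | cons a t ih => exact R.cons f a ih

lemma R.append_right {u v : List (Fin n)} (y : List (Fin n)) (h : R f u v) :
    R f (u ++ y) (v ++ y) := by
  refine Relation.ReflTransGen.lift (· ++ y) ?_ _ _ h
  rintro b c ⟨x, z, i, j, hb, hc⟩
  exact ⟨x, z ++ y, i, j, by simp [hb], by simp [hc]⟩

/-- The key combinatorial lemma, proved by chain induction, assuming cancellation
at strictly smaller lengths. -/
lemma chain (m : ℕ)
    (IH : ∀ (u v : List (Fin n)) (a : Fin n), u.length < m → R f (a :: u) (a :: v) → R f u v)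
    {a b : List (Fin n)} (h : R f a b) :
    ∀ (i : Fin n) (u : List (Fin n)) (j : Fin n) (v : List (Fin n)),
      a = i :: u → b = j :: v → u.length = m →
      (i = j ∧ R f u v) ∨ ∃ w, R f u (f i :: w) ∧ R f v (f j :: w) := by
  induction h using Relation.ReflTransGen.head_induction_on with
  | refl =>
    rintro i u j v rfl hb hm
    obtain ⟨rfl, rfl⟩ : i = j ∧ u = v := by
      constructor <;> [exact (List.cons.injEq .. ▸ hb).1; exact (List.cons.injEq .. ▸ hb).2]
    exact Or.inl ⟨rfl, R.refl f u⟩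
  | head h' hcb ih =>
    rintro i u j v rfl rfl hm
    obtain ⟨x, y, i', j', h1, h2⟩ := h'
    cases x with
    | nil =>
      simp only [List.nil_append, List.cons.injEq] at h1
      obtain ⟨rfl, rfl⟩ := h1
      have hy : (f j' :: y).length = m := by simpa using hm
      subst h2
      rcases ih j' (f j' :: y) j v rfl rfl hy with ⟨rfl, hv⟩ | ⟨w, hw1, hw2⟩
      · exact Or.inr ⟨y, R.refl f _, R.symm f hv⟩
      · have hm1 : y.length < m := by simp at hm; omega
        have : R f y w := IH y w (f j') hm1 hw1
        exact Or.inr ⟨w, R.cons f _ this, hw2⟩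
    | cons hd tl =>
      simp only [List.cons_append, List.cons.injEq] at h1
      obtain ⟨rfl, rfl⟩ := h1
      subst h2
      have hstep : R f (tl ++ i' :: f i' :: y) (tl ++ j' :: f j' :: y) :=
        R.single f ⟨tl, y, i', j', rfl, rfl⟩
      have hlen : (tl ++ j' :: f j' :: y).length = m := by simp at hm ⊢; omega
      rcases ih i (tl ++ j' :: f j' :: y) j v rfl rfl hlen with ⟨rfl, hv⟩ | ⟨w, hw1, hw2⟩
      · exact Or.inl ⟨rfl, R.trans f hstep hv⟩
      · exact Or.inr ⟨w, R.trans f hstep hw1, hw2⟩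

/-- Left cancellation of a single generator, by strong induction on length. -/
lemma cancel_cons : ∀ (m : ℕ) (u v : List (Fin n)) (a : Fin n),
    u.length = m → R f (a :: u) (a :: v) → R f u v := by
  intro m
  induction m using Nat.strong_induction_on with
  | _ m IH =>
    intro u v a hm h
    have IH' : ∀ (u v : List (Fin n)) (a : Fin n), u.length < m →
        R f (a :: u) (a :: v) → R f u v := fun u v a h1 h2 => IH _ h1 u v a rfl h2
    rcases chain f m IH' h a u a v rfl rfl hm with ⟨_, hv⟩ | ⟨w, hw1, hw2⟩
    · exact hv
    · exact R.trans f hw1 (R.symm f hw2)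

lemma cancel_append (x : List (Fin n)) {u v : List (Fin n)} (h : R f (x ++ u) (x ++ v)) :
    R f u v := by
  induction x with
  | nil => simpa using h
  | cons a t ih => exact ih (cancel_cons f _ (t ++ u) (t ++ v) a rfl h)

/-- The congruence induced by `R`. -/
def conOfR : Con (FreeMonoid (Fin n)) where
  r a b := R f a.toList b.toList
  iseqv := ⟨fun a => R.refl f _, fun h => R.symm f h, fun h h' => R.trans f h h'⟩
  mul' {a b c d} h h' := by
    show R f (FreeMonoid.toList (a * c)) (FreeMonoid.toList (b * d))
    rw [FreeMonoid.toList_mul, FreeMonoid.toList_mul]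
    exact R.trans f (R.append_right f _ h) (R.append_left f _ h')

end Stmt8Aux

/-- The monoid `M(f) = ⟨s_1,…,s_n ∣ s_1 s_{f(1)} = ⋯ = s_n s_{f(n)}⟩` is left-cancellative. -/
theorem stmt8 (n : ℕ) (hn : 2 ≤ n) (f : Fin n → Fin n)
    (c : Con (FreeMonoid (Fin n)))
    (hc : c = conGen fun u v => ∃ i j : Fin n,
      u = FreeMonoid.of i * FreeMonoid.of (f i) ∧
      v = FreeMonoid.of j * FreeMonoid.of (f j)) :
    ∀ a b d : c.Quotient, a * b = a * d → b = d := by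
  open Stmt8Aux in
  -- base relation is in c
  have hbase : ∀ i j : Fin n, c (FreeMonoid.of i * FreeMonoid.of (f i))
      (FreeMonoid.of j * FreeMonoid.of (f j)) := by
    intro i j
    rw [hc]
    exact ConGen.Rel.of _ _ ⟨i, j, rfl, rfl⟩
  -- c → R
  have hcR : ∀ u v : FreeMonoid (Fin n), c u v → (conOfR f) u v := by
    intro u v h
    exact (Con.conGen_le (c := conOfR f)).mpr
      (fun x y ⟨i, j, hx, hy⟩ => by
        subst hx; subst hy
        exact R.single f ⟨[], [], i, j, rfl, rfl⟩) (hc ▸ h)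
  -- R → c
  have hRc : ∀ u v : List (Fin n), R f u v → c (FreeMonoid.ofList u) (FreeMonoid.ofList v) := by
    intro u v h
    induction h with
    | refl => exact c.refl _
    | tail _ hstep ih =>
      refine c.trans ih ?_
      obtain ⟨x, y, i, j, rfl, rfl⟩ := hstep
      have e1 : (FreeMonoid.ofList (x ++ i :: f i :: y) : FreeMonoid (Fin n)) =
          FreeMonoid.ofList x * (FreeMonoid.of i * FreeMonoid.of (f i)) * FreeMonoid.ofList y := by
        apply FreeMonoid.toList.injective
        simp
      have e2 : (FreeMonoid.ofList (x ++ j :: f j :: y) : FreeMonoid (Fin n)) =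
          FreeMonoid.ofList x * (FreeMonoid.of j * FreeMonoid.of (f j)) * FreeMonoid.ofList y := by
        apply FreeMonoid.toList.injective
        simp
      rw [e1, e2]
      exact c.mul (c.mul (c.refl _) (hbase i j)) (c.refl _)
  intro a b d hmul
  induction a using Con.induction_on with
  | H x =>
    induction b using Con.induction_on with
    | H y =>
      induction d using Con.induction_on with
      | H z =>
        have h1 : c (x * y) (x * z) := by
          rw [← Con.eq c]
          simpa using hmul
        have h2 : R f (FreeMonoid.toList (x * y)) (FreeMonoid.toList (x * z)) := hcR _ _ h1
        rw [FreeMonoid.toList_mul, FreeMonoid.toList_mul] at h2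
        have h3 : R f (FreeMonoid.toList y) (FreeMonoid.toList z) :=
          cancel_append f (FreeMonoid.toList x) h2
        have h4 := hRc _ _ h3
        rw [FreeMonoid.ofList_toList, FreeMonoid.ofList_toList] at h4
        exact (Con.eq c).mpr h4
end

section
/- Fix n ≥ 2 and a function f : [n] → [n], and let M(f) = ⟨s_1,…,s_n ∣ s_1 s_{f(1)} = ⋯ = s_n s_{f(n)}⟩. Then for any two words v = s_{i_1}⋯s_{i_k} and w = s_{j_1}⋯s_{j_k} of the same length k over the generators, the following equality holds in M(f): s_{i_1}⋯s_{i_k} · s_{f(i_k)} s_{f³(i_{k−1})} ⋯ s_{f^{2k−1}(i_1)} = s_{j_1}⋯s_{j_k} · s_{f(j_k)} s_{f³(j_{k−1})} ⋯ s_{f^{2k−1}(j_1)}. In particular, any two elements of M(f) have a common right multiple. -/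
/-- In `M(f)`, for any two words `v = s_{i_1}⋯s_{i_k}` and `w = s_{j_1}⋯s_{j_k}` of the same
length, `s_{i_1}⋯s_{i_k} s_{f(i_k)} s_{f³(i_{k-1})} ⋯ s_{f^{2k-1}(i_1)} =
s_{j_1}⋯s_{j_k} s_{f(j_k)} s_{f³(j_{k-1})} ⋯ s_{f^{2k-1}(j_1)}`.  In particular, any two
elements of `M(f)` have a common right multiple. -/
theorem stmt9 (n : ℕ) (hn : 2 ≤ n) (f : Fin n → Fin n)
    (c : Con (FreeMonoid (Fin n)))
    (hc : c = conGen fun u v => ∃ i j : Fin n,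
      u = FreeMonoid.of i * FreeMonoid.of (f i) ∧
      v = FreeMonoid.of j * FreeMonoid.of (f j)) :
    (∀ v w : List (Fin n), v.length = w.length →
      c.mk' (FreeMonoid.ofList
        (v ++ (v.reverse.zipIdx.map fun p => f^[2 * p.2 + 1] p.1))) =
      c.mk' (FreeMonoid.ofList
        (w ++ (w.reverse.zipIdx.map fun p => f^[2 * p.2 + 1] p.1)))) ∧
    (∀ a b : c.Quotient, ∃ u x y : c.Quotient, u = a * x ∧ u = b * y) := by
  have hrel : ∀ i j : Fin n,
      c (FreeMonoid.of i * FreeMonoid.of (f i)) (FreeMonoid.of j * FreeMonoid.of (f j)) := by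
    intro i j; rw [hc]; exact ConGen.Rel.of _ _ ⟨i, j, rfl, rfl⟩
  set ch : Fin n → ℕ → List (Fin n) := fun a m => (List.range m).map (fun t => f^[t] a) with hch
  have ch_succ : ∀ a m, ch a (m+1) = a :: ch (f a) m := by
    intro a m
    simp [hch, List.range_succ_eq_map, List.map_map, Function.comp_def,
      Function.iterate_succ_apply]
  have ch_succ' : ∀ a m, ch a (m+1) = ch a m ++ [f^[m] a] := by
    intro a m
    simp only [hch, List.range_succ, List.map_append, List.map_cons, List.map_nil]
  have hchain : ∀ (k : ℕ) (a b : Fin n),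
      c (FreeMonoid.ofList (ch a (2*k))) (FreeMonoid.ofList (ch b (2*k))) := by
    intro k
    induction k with
    | zero => intro a b; exact c.refl _
    | succ k ih =>
      intro a b
      have h1 : ∀ x : Fin n, FreeMonoid.ofList (ch x (2*(k+1))) =
          (FreeMonoid.of x * FreeMonoid.of (f x)) *
            FreeMonoid.ofList (ch (f (f x)) (2*k)) := by
        intro x
        have h2 : 2*(k+1) = (2*k)+1+1 := by ring
        rw [h2, ch_succ, ch_succ]
        rfl
      rw [h1 a, h1 b]
      exact c.mul (hrel a b) (ih (f (f a)) (f (f b)))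
  have hg : ∀ (v : List (Fin n)) (a : Fin n),
      c (FreeMonoid.ofList (v ++ (v.reverse.zipIdx.map fun p => f^[2 * p.2 + 1] p.1)))
        (FreeMonoid.ofList (ch a (2*v.length))) := by
    intro v
    induction v with
    | nil => intro a; exact c.refl _
    | cons i v ih =>
      intro a
      have hdec : ((i :: v) ++ ((i :: v).reverse.zipIdx.map fun p => f^[2 * p.2 + 1] p.1))
          = i :: ((v ++ (v.reverse.zipIdx.map fun p => f^[2 * p.2 + 1] p.1))
              ++ [f^[2 * v.length + 1] i]) := by
        simp [List.reverse_cons, List.zipIdx_append]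
      rw [hdec]
      have hmid := ih (f i)
      have step : c (FreeMonoid.ofList
            (i :: ((v ++ (v.reverse.zipIdx.map fun p => f^[2 * p.2 + 1] p.1))
              ++ [f^[2 * v.length + 1] i])))
          (FreeMonoid.ofList (i :: (ch (f i) (2 * v.length) ++ [f^[2 * v.length + 1] i]))) := by
        have : ∀ l : List (Fin n),
            FreeMonoid.ofList (i :: (l ++ [f^[2 * v.length + 1] i]))
            = FreeMonoid.of i * FreeMonoid.ofList l *
              FreeMonoid.ofList [f^[2 * v.length + 1] i] := by
          intro l; rfl
        rw [this, this]
        exact c.mul (c.mul (c.refl _) hmid) (c.refl _)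
      refine c.trans step ?_
      have heq : (i :: (ch (f i) (2 * v.length) ++ [f^[2 * v.length + 1] i]))
          = ch i (2 * (i :: v).length) := by
        have h2 : 2 * (i :: v).length = (2 * v.length + 1) + 1 := by
          simp [List.length_cons]; ring
        rw [h2, ch_succ, ch_succ']
        simp [Function.iterate_succ_apply]
      rw [heq]
      exact hchain _ i a
  have a0 : Fin n := ⟨0, by omega⟩
  have part1 : ∀ v w : List (Fin n), v.length = w.length →
      c.mk' (FreeMonoid.ofList
        (v ++ (v.reverse.zipIdx.map fun p => f^[2 * p.2 + 1] p.1))) =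
      c.mk' (FreeMonoid.ofList
        (w ++ (w.reverse.zipIdx.map fun p => f^[2 * p.2 + 1] p.1))) := by
    intro v w h
    have : c (FreeMonoid.ofList (v ++ (v.reverse.zipIdx.map fun p => f^[2 * p.2 + 1] p.1)))
        (FreeMonoid.ofList (w ++ (w.reverse.zipIdx.map fun p => f^[2 * p.2 + 1] p.1))) := by
      refine c.trans (hg v a0) (c.trans ?_ (c.symm (hg w a0)))
      rw [h]
      exact c.refl _
    exact (c.eq).2 this
  refine ⟨part1, ?_⟩
  intro a b
  obtain ⟨x, rfl⟩ := Con.mk'_surjective a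
  obtain ⟨y, rfl⟩ := Con.mk'_surjective b
  set xl := FreeMonoid.toList x with hxl
  set yl := FreeMonoid.toList y with hyl
  set m := max xl.length yl.length with hm
  set v : List (Fin n) := xl ++ List.replicate (m - xl.length) a0 with hv
  set w : List (Fin n) := yl ++ List.replicate (m - yl.length) a0 with hw
  have hlen : v.length = w.length := by
    simp [hv, hw]
    omega
  refine ⟨c.mk' (FreeMonoid.ofList (v ++ (v.reverse.zipIdx.map fun p => f^[2 * p.2 + 1] p.1))),
    c.mk' (FreeMonoid.ofList (List.replicate (m - xl.length) a0
      ++ (v.reverse.zipIdx.map fun p => f^[2 * p.2 + 1] p.1))),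
    c.mk' (FreeMonoid.ofList (List.replicate (m - yl.length) a0
      ++ (w.reverse.zipIdx.map fun p => f^[2 * p.2 + 1] p.1))), ?_, ?_⟩
  · have : FreeMonoid.ofList (v ++ (v.reverse.zipIdx.map fun p => f^[2 * p.2 + 1] p.1))
        = x * FreeMonoid.ofList (List.replicate (m - xl.length) a0
          ++ (v.reverse.zipIdx.map fun p => f^[2 * p.2 + 1] p.1)) := by
      conv_rhs => rw [← FreeMonoid.ofList_toList x]
      rw [hv, ← hxl, List.append_assoc]
      rfl
    rw [this, map_mul]
  · rw [part1 v w hlen]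
    have : FreeMonoid.ofList (w ++ (w.reverse.zipIdx.map fun p => f^[2 * p.2 + 1] p.1))
        = y * FreeMonoid.ofList (List.replicate (m - yl.length) a0
          ++ (w.reverse.zipIdx.map fun p => f^[2 * p.2 + 1] p.1)) := by
      conv_rhs => rw [← FreeMonoid.ofList_toList y]
      rw [hw, ← hyl, List.append_assoc]
      rfl
    rw [this, map_mul]
end

section
/- Fix n ≥ 2 and f : [n] → [n], and let M(f) = ⟨s_1,…,s_n ∣ s_1 s_{f(1)} = ⋯ = s_n s_{f(n)}⟩. Then for distinct atoms s_i and s_j (i ≠ j), the element s_i s_{f(i)} = s_j s_{f(j)} is the least common right multiple of s_i and s_j under left divisibility: any u ∈ M(f) with s_i ≤_L u and s_j ≤_L u satisfies s_i s_{f(i)} ≤_L u. -/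
namespace Stmt10Aux

variable {n : ℕ} (f : Fin n → Fin n)

/-- The defining relation of `M(f)`. -/
def R : FreeMonoid (Fin n) → FreeMonoid (Fin n) → Prop := fun u v =>
  ∃ i j : Fin n, u = FreeMonoid.of i * FreeMonoid.of (f i) ∧
    v = FreeMonoid.of j * FreeMonoid.of (f j)

/-- A word has a redex if it contains an adjacent pair `a, f a`. -/
def HasRedex (w : FreeMonoid (Fin n)) : Prop :=
  ∃ (l r : FreeMonoid (Fin n)) (a : Fin n),
    w = l * (FreeMonoid.of a * FreeMonoid.of (f a)) * r

lemma hasRedex_mul_left {w : FreeMonoid (Fin n)} (h : HasRedex f w) (u : FreeMonoid (Fin n)) :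
    HasRedex f (w * u) := by
  obtain ⟨l, r, a, rfl⟩ := h
  exact ⟨l, r * u, a, by simp [mul_assoc]⟩

lemma hasRedex_mul_right {w : FreeMonoid (Fin n)} (h : HasRedex f w) (u : FreeMonoid (Fin n)) :
    HasRedex f (u * w) := by
  obtain ⟨l, r, a, rfl⟩ := h
  exact ⟨u * l, r, a, by simp [mul_assoc]⟩

/-- The congruence "equal, or both have a redex". -/
def bigCon : Con (FreeMonoid (Fin n)) where
  r w v := w = v ∨ (HasRedex f w ∧ HasRedex f v)
  iseqv := by
    constructor
    · intro x; exact Or.inl rfl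
    · rintro x y (rfl | ⟨h1, h2⟩)
      · exact Or.inl rfl
      · exact Or.inr ⟨h2, h1⟩
    · rintro x y z (rfl | ⟨h1, h2⟩) (rfl | ⟨h3, h4⟩)
      · exact Or.inl rfl
      · exact Or.inr ⟨h3, h4⟩
      · exact Or.inr ⟨h1, h2⟩
      · exact Or.inr ⟨h1, h4⟩
  mul' := by
    rintro w v w' v' (rfl | ⟨h1, h2⟩) (rfl | ⟨h3, h4⟩)
    · exact Or.inl rfl
    · exact Or.inr ⟨hasRedex_mul_right f h3 w, hasRedex_mul_right f h4 w⟩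
    · exact Or.inr ⟨hasRedex_mul_left f h1 w', hasRedex_mul_left f h2 w'⟩
    · exact Or.inr ⟨hasRedex_mul_left f h1 w', hasRedex_mul_left f h2 v'⟩

lemma conGen_le_big : conGen (R f) ≤ bigCon f := by
  apply Con.conGen_le.mpr
  rintro u v ⟨a, b, rfl, rfl⟩
  exact Or.inr ⟨⟨1, 1, a, by simp⟩, ⟨1, 1, b, by simp⟩⟩

lemma reach (k : Fin n) : ∀ (ls : List (Fin n)) (a : Fin n) (r : FreeMonoid (Fin n)),
    ∃ rest, (conGen (R f))
      (FreeMonoid.ofList ls * (FreeMonoid.of a * FreeMonoid.of (f a)) * r)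
      (FreeMonoid.of k * FreeMonoid.of (f k) * rest) := by
  intro ls
  induction ls using List.reverseRecOn with
  | nil =>
    intro a r
    refine ⟨r, ?_⟩
    have hbase : (conGen (R f)) (FreeMonoid.of a * FreeMonoid.of (f a))
        (FreeMonoid.of k * FreeMonoid.of (f k)) :=
      ConGen.Rel.of _ _ ⟨a, k, rfl, rfl⟩
    simpa using (conGen (R f)).mul hbase ((conGen (R f)).refl r)
  | append_singleton l b ih =>
    intro a r
    obtain ⟨rest, h⟩ := ih b (FreeMonoid.of (f (f b)) * r)
    refine ⟨rest, ?_⟩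
    refine (conGen (R f)).trans ?_ h
    have hbase : (conGen (R f)) (FreeMonoid.of a * FreeMonoid.of (f a))
        (FreeMonoid.of (f b) * FreeMonoid.of (f (f b))) :=
      ConGen.Rel.of _ _ ⟨a, f b, rfl, rfl⟩
    have := (conGen (R f)).mul
      ((conGen (R f)).mul ((conGen (R f)).refl (FreeMonoid.ofList (l ++ [b]))) hbase)
      ((conGen (R f)).refl r)
    have heq : FreeMonoid.ofList (l ++ [b]) * (FreeMonoid.of (f b) * FreeMonoid.of (f (f b))) * r
        = FreeMonoid.ofList l * (FreeMonoid.of b * FreeMonoid.of (f b)) *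
          (FreeMonoid.of (f (f b)) * r) := by
      simp [mul_assoc]
    exact heq ▸ this

lemma reach' {w : FreeMonoid (Fin n)} (h : HasRedex f w) (k : Fin n) :
    ∃ rest, (conGen (R f)) w (FreeMonoid.of k * FreeMonoid.of (f k) * rest) := by
  obtain ⟨l, r, a, rfl⟩ := h
  have := reach f k l.toList a r
  simpa using this

end Stmt10Aux

/-- In `M(f)`, for distinct atoms `s_i`, `s_j`, the element `s_i s_{f(i)} = s_j s_{f(j)}`
is the least common right multiple of `s_i` and `s_j` under left divisibility. -/
theorem stmt10 (n : ℕ) (hn : 2 ≤ n) (f : Fin n → Fin n)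
    (c : Con (FreeMonoid (Fin n)))
    (hc : c = conGen fun u v => ∃ i j : Fin n,
      u = FreeMonoid.of i * FreeMonoid.of (f i) ∧
      v = FreeMonoid.of j * FreeMonoid.of (f j))
    (i j : Fin n) (hij : i ≠ j) :
    ∀ u : c.Quotient,
      (∃ x, u = c.mk' (FreeMonoid.of i) * x) →
      (∃ y, u = c.mk' (FreeMonoid.of j) * y) →
      ∃ z, u = c.mk' (FreeMonoid.of i * FreeMonoid.of (f i)) * z := by
  intro u hx hy
  obtain ⟨x, hxu⟩ := hx
  obtain ⟨y, hyu⟩ := hy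
  obtain ⟨w, rfl⟩ := c.mk'_surjective u
  obtain ⟨x', rfl⟩ := c.mk'_surjective x
  obtain ⟨y', rfl⟩ := c.mk'_surjective y
  rw [← map_mul] at hxu hyu
  have h1 : c w (FreeMonoid.of i * x') := (Con.eq c).mp hxu
  have h2 : c w (FreeMonoid.of j * y') := (Con.eq c).mp hyu
  have hc' : c ≤ Stmt10Aux.bigCon f := hc ▸ Stmt10Aux.conGen_le_big f
  have b1 := hc' h1
  have b2 := hc' h2
  have hred : Stmt10Aux.HasRedex f w := by
    rcases b1 with rfl | ⟨hw, _⟩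
    · rcases b2 with heq | ⟨hw, _⟩
      · exfalso
        have := congrArg FreeMonoid.toList heq
        simp [FreeMonoid.toList_of] at this
        exact hij this.1
      · exact hw
    · exact hw
  obtain ⟨rest, hrw⟩ := Stmt10Aux.reach' f hred i
  refine ⟨c.mk' rest, ?_⟩
  rw [← map_mul]
  exact (Con.eq c).mpr (hc ▸ hrw)
end

section
/- Let f : [n] → [n] be a bijection with n ≥ 2, and let M(f) = ⟨s_1,…,s_n ∣ s_1 s_{f(1)} = ⋯ = s_n s_{f(n)}⟩. Then M(f) is right-cancellative: ba = ca implies b = c for all a, b, c ∈ M(f). -/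
namespace Stmt11

variable {n : ℕ} (f : Fin n → Fin n)

/-- link-free (reversed) words -/
def LF (r : List (Fin n)) : Prop := List.Chain' (fun x y => x ≠ f y) r

/-- the state: number of Δ's and reversed link-free remainder -/
def St := {s : ℕ × List (Fin n) // LF f s.2}

def stepAux : ℕ × List (Fin n) → Fin n → ℕ × List (Fin n)
  | (p, []), k => (p, [k])
  | (p, b :: t), k => if k = f b then (p + 1, t.map (f ∘ f)) else (p, k :: b :: t)

variable {f}

theorem LF_map (hf : Function.Injective f) {t : List (Fin n)} (h : LF f t) :
    LF f (t.map (f ∘ f)) := by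
  unfold LF List.Chain' at *
  rw [List.isChain_map]
  refine h.imp ?_
  intro a b hab hc
  exact hab (hf (hf hc))

theorem LF_tail {b : Fin n} {t : List (Fin n)} (h : LF f (b :: t)) : LF f t :=
  h.tail

theorem stepAux_pres (hf : Function.Injective f) {p : ℕ} {r : List (Fin n)} (h : LF f r)
    (k : Fin n) : LF f (stepAux f (p, r) k).2 := by
  match r with
  | [] => simpa [stepAux, LF, List.Chain'] using trivial
  | b :: t =>
    simp only [stepAux]
    split
    · exact LF_map hf (LF_tail h)
    · exact List.IsChain.cons_cons (by assumption) h

theorem stepAux_stepAux (hf : Function.Injective f) {p : ℕ} {r : List (Fin n)} (h : LF f r)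
    (i : Fin n) : stepAux f (stepAux f (p, r) i) (f i) = (p + 1, r.map (f ∘ f)) := by
  match r with
  | [] => simp [stepAux]
  | b :: t =>
    simp only [stepAux]
    by_cases hib : i = f b
    · subst hib
      simp only [if_pos rfl]
      match t with
      | [] => simp [stepAux]
      | x :: t' =>
        have hne : ¬ (f (f b) = f ((f ∘ f) x)) := by
          intro hcon
          exact (List.isChain_cons_cons.mp h).1 (hf (hf hcon))
        simp only [List.map_cons, stepAux, if_neg hne]
        simpa using hne
    · rw [if_neg hib]
      simp [stepAux]

variable (f) in
def step (s : St f) (hf : Function.Injective f) (k : Fin n) : St f :=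
  ⟨stepAux f s.1 k, by
    have := stepAux_pres hf (p := s.1.1) s.2 k
    simpa using this⟩


theorem mixCase (hf : Function.Injective f) {b k : Fin n} {t r : List (Fin n)}
    (hv : LF f (b :: t)) (hk : k = f b) (h : k :: r = t.map (f ∘ f)) : False := by
  match t with
  | [] => simp at h
  | x :: t' =>
    simp only [List.map_cons, List.cons.injEq] at h
    have hbx : f b = f (f x) := by rw [← hk]; exact h.1
    exact (List.isChain_cons_cons.mp hv).1 (hf hbx)

theorem stepAux_inj (hf : Function.Injective f) {p q : ℕ} {k : Fin n} :
    ∀ {r v : List (Fin n)}, LF f r → LF f v →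
      stepAux f (p, r) k = stepAux f (q, v) k → (p, r) = (q, v)
  | [], [], _, _, h => by simpa [stepAux] using h
  | [], b :: t, _, hv, h => by
    simp only [stepAux] at h
    split_ifs at h with hk
    · obtain ⟨-, h2⟩ := Prod.mk.injEq .. ▸ h
      exact absurd (mixCase hf hv hk h2) (not_false)
    · obtain ⟨-, h2⟩ := Prod.mk.injEq .. ▸ h
      simp at h2
  | b :: t, [], hr, _, h => by
    simp only [stepAux] at h
    split_ifs at h with hk
    · obtain ⟨-, h2⟩ := Prod.mk.injEq .. ▸ h
      exact absurd (mixCase hf hr hk h2.symm) (not_false)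
    · obtain ⟨-, h2⟩ := Prod.mk.injEq .. ▸ h
      simp at h2
  | b :: t, b' :: t', hr, hv, h => by
    simp only [stepAux] at h
    split_ifs at h with h1 h2 h2
    · obtain ⟨hpq, hmap⟩ := Prod.mk.injEq .. ▸ h
      have hb : b = b' := hf (by rw [← h1, ← h2])
      have ht : t = t' := List.map_injective_iff.mpr (hf.comp hf) hmap
      simp [hb, ht, Nat.add_right_cancel hpq]
    · obtain ⟨-, hmap⟩ := Prod.mk.injEq .. ▸ h
      exact absurd (mixCase hf hr h1 hmap.symm) not_false
    · obtain ⟨-, hmap⟩ := Prod.mk.injEq .. ▸ h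
      exact absurd (mixCase hf hv h2 hmap) not_false
    · obtain ⟨hpq, hl⟩ := Prod.mk.injEq .. ▸ h
      simp only [List.cons.injEq] at hl
      simp [hpq, hl.2]


theorem step_inj (hf : Function.Injective f) {s t : St f} {k : Fin n}
    (h : step f s hf k = step f t hf k) : s = t := by
  obtain ⟨⟨p, r⟩, hs⟩ := s
  obtain ⟨⟨q, v⟩, ht⟩ := t
  have h' : stepAux f (p, r) k = stepAux f (q, v) k := congrArg Subtype.val h
  exact Subtype.ext (stepAux_inj hf hs ht h')

variable (f) in
def bigStep (hf : Function.Injective f) : Function.End (St f) :=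
  fun s => ⟨(s.1.1 + 1, s.1.2.map (f ∘ f)), LF_map hf s.2⟩

theorem step_step (hf : Function.Injective f) (s : St f) (i : Fin n) :
    step f (step f s hf i) hf (f i) = bigStep f hf s := by
  obtain ⟨⟨p, r⟩, hs⟩ := s
  exact Subtype.ext (stepAux_stepAux hf hs i)

variable (f) in
def psi (hf : Function.Injective f) : FreeMonoid (Fin n) →* (Function.End (St f))ᵐᵒᵖ :=
  FreeMonoid.lift (fun k => MulOpposite.op (fun s => step f s hf k : Function.End (St f)))

theorem psi_rel (hf : Function.Injective f) (i : Fin n) :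
    psi f hf (.of i * .of (f i)) = MulOpposite.op (bigStep f hf) := by
  rw [map_mul, psi, FreeMonoid.lift_eval_of, FreeMonoid.lift_eval_of]
  apply MulOpposite.unop_injective
  refine funext fun s => ?_
  exact step_step hf s i

variable (f) in
def RR (u v : FreeMonoid (Fin n)) : Prop :=
  ∃ i j : Fin n, u = FreeMonoid.of i * FreeMonoid.of (f i) ∧
    v = FreeMonoid.of j * FreeMonoid.of (f j)

theorem hker (hf : Function.Injective f) : conGen (RR f) ≤ Con.ker (psi f hf) := by
  refine Con.conGen_le.mpr ?_
  rintro u v ⟨i, j, rfl, rfl⟩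
  rw [Con.ker_rel, psi_rel hf i, psi_rel hf j]

variable (f) in
def s0 : St f := ⟨(0, []), List.isChain_nil⟩

variable (f) in
def NF (hf : Function.Injective f) (u : FreeMonoid (Fin n)) : St f :=
  (psi f hf u).unop (s0 f)

theorem NF_mul_of (hf : Function.Injective f) (u : FreeMonoid (Fin n)) (k : Fin n) :
    NF f hf (u * .of k) = step f (NF f hf u) hf k := by
  unfold NF
  rw [map_mul, MulOpposite.unop_mul]
  show ((psi f hf (.of k)).unop ∘ (psi f hf u).unop) (s0 f) = _
  rw [psi, FreeMonoid.lift_eval_of]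
  rfl

theorem crel (i j : Fin n) :
    (conGen (RR f)) (.of i * .of (f i)) (.of j * .of (f j)) :=
  ConGen.Rel.of _ _ ⟨i, j, rfl, rfl⟩

section Recon

variable (i0 : Fin n)

variable (f) in
def pi : FreeMonoid (Fin n) →* (conGen (RR f)).Quotient := (conGen (RR f)).mk'

-- Δ
variable (f) in
def delta : FreeMonoid (Fin n) := .of i0 * .of (f i0)

theorem ceq (i j : Fin n) : pi f (.of i * .of (f i)) = pi f (.of j * .of (f j)) :=
  (Con.eq _).mpr (crel i j)

theorem lemC (i : Fin n) :
    pi f (.of i * delta f i0) = pi f (delta f i0 * .of (f (f i))) := by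
  unfold delta
  calc pi f (.of i * (.of i0 * .of (f i0)))
      = pi f (.of i) * pi f (.of i0 * .of (f i0)) := by rw [← map_mul]
    _ = pi f (.of i) * pi f (.of (f i) * .of (f (f i))) := by rw [ceq i0 (f i)]
    _ = pi f ((.of i * .of (f i)) * .of (f (f i))) := by rw [← map_mul, ← mul_assoc]
    _ = pi f (.of i * .of (f i)) * pi f (.of (f (f i))) := by rw [map_mul]
    _ = pi f (.of i0 * .of (f i0)) * pi f (.of (f (f i))) := by rw [ceq i i0]
    _ = pi f _ := by rw [← map_mul]

theorem lemB : ∀ l : List (Fin n),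
    pi f (.ofList l * delta f i0) = pi f (delta f i0 * .ofList (l.map (f ∘ f))) := by
  intro l
  induction l using List.reverseRecOn with
  | nil => simp
  | append_singleton l i ih =>
    rw [FreeMonoid.ofList_append, FreeMonoid.ofList_singleton, mul_assoc, map_mul,
      lemC i0 i, ← map_mul, ← mul_assoc, map_mul, ih, ← map_mul, mul_assoc,
      ← FreeMonoid.ofList_singleton, ← FreeMonoid.ofList_append, List.map_append]
    rfl

variable (f) in
def expand (s : St f) : FreeMonoid (Fin n) := delta f i0 ^ s.1.1 * .ofList s.1.2.reverse

theorem expand_step (hf : Function.Injective f) (s : St f) (k : Fin n) :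
    pi f (expand f i0 s * .of k) = pi f (expand f i0 (step f s hf k)) := by
  obtain ⟨⟨p, r⟩, hs⟩ := s
  match r with
  | [] =>
    show pi f (delta f i0 ^ p * FreeMonoid.ofList ([] : List (Fin n)).reverse * .of k) = _
    simp only [step, stepAux, expand]
    simp [FreeMonoid.ofList_nil, FreeMonoid.ofList_singleton]
  | b :: t =>
    by_cases hk : k = f b
    · subst hk
      show pi f (delta f i0 ^ p * FreeMonoid.ofList (b :: t).reverse * .of (f b)) = _
      simp only [step, stepAux, if_pos rfl, expand]
      rw [List.reverse_cons, FreeMonoid.ofList_append, FreeMonoid.ofList_singleton]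
      calc pi f (delta f i0 ^ p * (FreeMonoid.ofList t.reverse * FreeMonoid.of b) * .of (f b))
          = pi f (delta f i0 ^ p) * pi f (.ofList t.reverse) *
              pi f (.of b * .of (f b)) := by
            rw [← map_mul, ← map_mul]; simp [mul_assoc]
        _ = pi f (delta f i0 ^ p) * pi f (.ofList t.reverse) *
              pi f (.of i0 * .of (f i0)) := by rw [ceq b i0]
        _ = pi f (delta f i0 ^ p) * pi f (.ofList t.reverse * delta f i0) := by
            rw [mul_assoc, ← map_mul]; rfl
        _ = pi f (delta f i0 ^ p) * pi f (delta f i0 * .ofList (t.reverse.map (f ∘ f))) := by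
            rw [lemB]
        _ = pi f (delta f i0 ^ (p + 1) * .ofList ((t.map (f ∘ f)).reverse)) := by
            rw [← map_mul, ← mul_assoc, ← pow_succ, List.map_reverse]
    · show pi f (delta f i0 ^ p * FreeMonoid.ofList (b :: t).reverse * .of k) = _
      simp only [step, stepAux, if_neg hk, expand]
      simp [List.reverse_cons, FreeMonoid.ofList_append, FreeMonoid.ofList_singleton, mul_assoc]

theorem recon (hf : Function.Injective f) : ∀ l : List (Fin n),
    pi f (.ofList l) = pi f (expand f i0 (NF f hf (.ofList l))) := by
  intro l
  induction l using List.reverseRecOn with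
  | nil =>
    have h1 : NF f hf (.ofList []) = s0 f := by
      unfold NF
      rw [FreeMonoid.ofList_nil, map_one]
      rfl
    rw [h1]
    simp [expand, s0, FreeMonoid.ofList_nil]
  | append_singleton l k ih =>
    rw [FreeMonoid.ofList_append, FreeMonoid.ofList_singleton, map_mul, ih, ← map_mul,
      NF_mul_of hf _ k]
    exact expand_step i0 hf (NF f hf (.ofList l)) k

theorem recon' (hf : Function.Injective f) (u : FreeMonoid (Fin n)) :
    pi f u = pi f (expand f i0 (NF f hf u)) :=
  recon i0 hf (FreeMonoid.toList u)

theorem cancel_gen (i0 : Fin n) (hf : Function.Bijective f) (x y : FreeMonoid (Fin n)) (k : Fin n)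
    (h : pi f x * pi f (.of k) = pi f y * pi f (.of k)) : pi f x = pi f y := by
  have h1 : pi f (x * .of k) = pi f (y * .of k) := by rw [map_mul, map_mul]; exact h
  have h2 : (conGen (RR f)) (x * .of k) (y * .of k) := (Con.eq _).mp h1
  have h3 : psi f hf.injective (x * .of k) = psi f hf.injective (y * .of k) :=
    (Con.ker_rel _).mp (hker hf.injective h2)
  have h4 : NF f hf.injective (x * .of k) = NF f hf.injective (y * .of k) := by
    unfold NF; rw [h3]
  rw [NF_mul_of, NF_mul_of] at h4
  have h5 : NF f hf.injective x = NF f hf.injective y := step_inj hf.injective h4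
  rw [recon' i0 hf.injective x, recon' i0 hf.injective y, h5]

theorem main (i0 : Fin n) (hf : Function.Bijective f) :
    ∀ (l : List (Fin n)) (x y : FreeMonoid (Fin n)),
      pi f x * pi f (.ofList l) = pi f y * pi f (.ofList l) → pi f x = pi f y := by
  intro l
  induction l using List.reverseRecOn with
  | nil =>
    intro x y h
    simpa [FreeMonoid.ofList_nil] using h
  | append_singleton l k ih =>
    intro x y h
    rw [FreeMonoid.ofList_append, FreeMonoid.ofList_singleton, map_mul, ← mul_assoc,
      ← mul_assoc, ← map_mul, ← map_mul] at h
    have := cancel_gen i0 hf _ _ k h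
    rw [map_mul, map_mul] at this
    exact ih x y this

end Recon

end Stmt11

/-- If `f : [n] → [n]` is a bijection, then `M(f)` is right-cancellative. -/
theorem stmt11 (n : ℕ) (hn : 2 ≤ n) (f : Fin n → Fin n) (hf : Function.Bijective f)
    (c : Con (FreeMonoid (Fin n)))
    (hc : c = conGen fun u v => ∃ i j : Fin n,
      u = FreeMonoid.of i * FreeMonoid.of (f i) ∧
      v = FreeMonoid.of j * FreeMonoid.of (f j)) :
    ∀ a b d : c.Quotient, b * a = d * a → b = d := by
  subst hc
  intro a b d h
  obtain ⟨u, rfl⟩ := Con.mk'_surjective a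
  obtain ⟨x, rfl⟩ := Con.mk'_surjective b
  obtain ⟨y, rfl⟩ := Con.mk'_surjective d
  have hn1 : 0 < n := by omega
  exact Stmt11.main (⟨0, hn1⟩ : Fin n) hf (FreeMonoid.toList u) x y h
end

section
/- In the monoid M = ⟨a, b, c ∣ aa = ba, bb = cb, ab = cc⟩, the equality c·a·a = c·c·a holds, but a·a ≠ c·a; hence M is not left-cancellative. -/
/-- Interpretation in `Function.End (Fin 3)` separating `aa` from `ca`. -/
instance : DecidableEq (Function.End (Fin 3)) :=
  inferInstanceAs (DecidableEq (Fin 3 → Fin 3))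

def phi13 : FreeMonoid (Fin 3) →* Function.End (Fin 3) :=
  FreeMonoid.lift ![![0, 0, 1], ![0, 0, 0], ![0, 2, 0]]

/-- In the monoid `M = ⟨a, b, c ∣ aa = ba, bb = cb, ab = cc⟩` (with `a = 0`, `b = 1`,
`c = 2`), we have `caa = cca` but `aa ≠ ca`; hence `M` is not left-cancellative. -/
theorem stmt13 (c : Con (FreeMonoid (Fin 3)))
    (hc : c = conGen fun u v =>
      (u = FreeMonoid.ofList [0, 0] ∧ v = FreeMonoid.ofList [1, 0]) ∨
      (u = FreeMonoid.ofList [1, 1] ∧ v = FreeMonoid.ofList [2, 1]) ∨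
      (u = FreeMonoid.ofList [0, 1] ∧ v = FreeMonoid.ofList [2, 2])) :
    c.mk' (FreeMonoid.ofList [2, 0, 0]) = c.mk' (FreeMonoid.ofList [2, 2, 0]) ∧
    c.mk' (FreeMonoid.ofList [0, 0]) ≠ c.mk' (FreeMonoid.ofList [2, 0]) ∧
    ¬ ∀ x y z : c.Quotient, x * y = x * z → y = z := by
  have h1 : c (FreeMonoid.ofList [0, 0]) (FreeMonoid.ofList [1, 0]) := by
    rw [hc]; exact ConGen.Rel.of _ _ (Or.inl ⟨rfl, rfl⟩)
  have h2 : c (FreeMonoid.ofList [1, 1]) (FreeMonoid.ofList [2, 1]) := by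
    rw [hc]; exact ConGen.Rel.of _ _ (Or.inr (Or.inl ⟨rfl, rfl⟩))
  have h3 : c (FreeMonoid.ofList [0, 1]) (FreeMonoid.ofList [2, 2]) := by
    rw [hc]; exact ConGen.Rel.of _ _ (Or.inr (Or.inr ⟨rfl, rfl⟩))
  have key : c (FreeMonoid.ofList [2, 0, 0]) (FreeMonoid.ofList [2, 2, 0]) := by
    -- caa ~ cba ~ bba ~ baa ~ aaa ~ aba ~ cca
    have s1 : c (FreeMonoid.ofList [2, 0, 0]) (FreeMonoid.ofList [2, 1, 0]) :=
      c.mul (c.refl (FreeMonoid.ofList [2])) h1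
    have s2 : c (FreeMonoid.ofList [2, 1, 0]) (FreeMonoid.ofList [1, 1, 0]) :=
      c.mul (c.symm h2) (c.refl (FreeMonoid.ofList [0]))
    have s3 : c (FreeMonoid.ofList [1, 1, 0]) (FreeMonoid.ofList [1, 0, 0]) :=
      c.mul (c.refl (FreeMonoid.ofList [1])) (c.symm h1)
    have s4 : c (FreeMonoid.ofList [1, 0, 0]) (FreeMonoid.ofList [0, 0, 0]) :=
      c.mul (c.symm h1) (c.refl (FreeMonoid.ofList [0]))
    have s5 : c (FreeMonoid.ofList [0, 0, 0]) (FreeMonoid.ofList [0, 1, 0]) :=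
      c.mul (c.refl (FreeMonoid.ofList [0])) h1
    have s6 : c (FreeMonoid.ofList [0, 1, 0]) (FreeMonoid.ofList [2, 2, 0]) :=
      c.mul h3 (c.refl (FreeMonoid.ofList [0]))
    exact c.trans s1 (c.trans s2 (c.trans s3 (c.trans s4 (c.trans s5 s6))))
  have hle : c ≤ Con.ker phi13 := by
    rw [hc]
    apply Con.conGen_le.mpr
    rintro u v (⟨rfl, rfl⟩ | ⟨rfl, rfl⟩ | ⟨rfl, rfl⟩) <;>
      · show phi13 _ = phi13 _
        decide
  have hne : c.mk' (FreeMonoid.ofList [0, 0]) ≠ c.mk' (FreeMonoid.ofList [2, 0]) := by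
    intro h
    have hcc : c (FreeMonoid.ofList [0, 0]) (FreeMonoid.ofList [2, 0]) := Quotient.exact' h
    exact absurd (hle hcc)
      (by decide : ¬ phi13 (FreeMonoid.ofList [0, 0]) = phi13 (FreeMonoid.ofList [2, 0]))
  refine ⟨Quot.sound key, hne, fun h => hne ?_⟩
  have e1 : c.mk' (FreeMonoid.ofList [2]) * c.mk' (FreeMonoid.ofList [0, 0]) =
      c.mk' (FreeMonoid.ofList [2, 0, 0]) := rfl
  have e2 : c.mk' (FreeMonoid.ofList [2]) * c.mk' (FreeMonoid.ofList [2, 0]) =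
      c.mk' (FreeMonoid.ofList [2, 2, 0]) := rfl
  exact h _ _ _ (e1.trans ((Quot.sound key).trans e2.symm))
end

section
/- Let 𝓛 be a finite-type ℕ-graded upho lattice with core M_n (the rank-two lattice with n ≥ 2 atoms), and suppose that for each i with 1 ≤ i ≤ k (some fixed k ≥ 3), there is an element of rank i in 𝓛 covering all elements of rank i−1. Then there is an element of rank k+1 in 𝓛 covering all elements of rank k. -/
/-- In an upho lattice with core `M_n`, if for each `1 ≤ i ≤ k` (with `k ≥ 3`) there is an
element of rank `i` covering all elements of rank `i-1`, then there is an element of rank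
`k+1` covering all elements of rank `k`. -/
theorem stmt15 {P : Type*} [Lattice P] [OrderBot P] (n : ℕ) (hn : 2 ≤ n)
    (ρ : P → ℕ) (hρ0 : ρ ⊥ = 0) (hcov : ∀ x y : P, x ⋖ y → ρ y = ρ x + 1)
    (hdown : ∀ x : P, x ≠ ⊥ → ∃ y, y ⋖ x)
    (hfin : ∀ i : ℕ, {x : P | ρ x = i}.Finite)
    (hupho : ∀ p : P, Nonempty ({q : P // p ≤ q} ≃o P))
    -- the core is `M_n`: the covers of each `x` are `n` in number, and their join `m`
    -- covers each of them
    (hcore : ∀ x : P, ∃ m : P, IsLUB {y | x ⋖ y} m ∧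
      Nat.card {y : P // x ⋖ y} = n ∧ ∀ y : P, x ⋖ y → y ⋖ m)
    (k : ℕ) (hk : 3 ≤ k)
    (hdom : ∀ i : ℕ, 1 ≤ i → i ≤ k →
      ∃ x : P, ρ x = i ∧ ∀ y : P, ρ y = i - 1 → y ⋖ x) :
    ∃ x : P, ρ x = k + 1 ∧ ∀ y : P, ρ y = k → y ⋖ x := by
  -- rank-0 elements are ⊥
  have rank0 : ∀ x : P, ρ x = 0 → x = ⊥ := by
    intro x hx
    by_contra h
    obtain ⟨y, hy⟩ := hdown x h
    have := hcov y x hy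
    omega
  -- covers in a principal filter are the same as covers in P
  have filt_cov : ∀ (v : P) (a b : {q : P // v ≤ q}), a ⋖ b → (a : P) ⋖ (b : P) := by
    intro v a b hab
    refine ⟨Subtype.coe_lt_coe.mpr hab.1, ?_⟩
    intro c hac hcb
    have h1 : a < (⟨c, a.2.trans hac.le⟩ : {q : P // v ≤ q}) := Subtype.coe_lt_coe.mp hac
    have h2 : (⟨c, a.2.trans hac.le⟩ : {q : P // v ≤ q}) < b := Subtype.coe_lt_coe.mp hcb
    exact hab.2 h1 h2
  -- rank along an upho isomorphism
  have rank_e : ∀ (v : P) (e : {q : P // v ≤ q} ≃o P) (q : {q : P // v ≤ q}),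
      ρ (q : P) = ρ v + ρ (e q) := by
    intro v e
    suffices h : ∀ (m : ℕ) (q : {q : P // v ≤ q}), ρ (e q) = m → ρ (q : P) = ρ v + m by
      intro q; exact h _ q rfl
    intro m
    induction m with
    | zero =>
      intro q hq
      have hbot : e q = ⊥ := rank0 _ hq
      have hle : q ≤ ⟨v, le_rfl⟩ := by
        rw [← e.le_iff_le, hbot]; exact bot_le
      have hqv : (q : P) = v := le_antisymm hle q.2
      rw [hqv]; omega
    | succ m ih =>
      intro q hq
      have hne : e q ≠ ⊥ := by
        intro h; rw [h, hρ0] at hq; omega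
      obtain ⟨y, hy⟩ := hdown (e q) hne
      have hrk : ρ (e q) = ρ y + 1 := hcov _ _ hy
      have hy' : e (e.symm y) ⋖ e q := by rwa [e.apply_symm_apply]
      have hcov' : e.symm y ⋖ q := (apply_covBy_apply_iff e).mp hy'
      have hcovP : ((e.symm y : {q : P // v ≤ q}) : P) ⋖ (q : P) := filt_cov v _ _ hcov'
      have h1 : ρ ((e.symm y : {q : P // v ≤ q}) : P) = ρ v + m := by
        apply ih
        rw [e.apply_symm_apply]
        omega
      have := hcov _ _ hcovP
      omega
  -- strict rank monotonicity
  have strict : ∀ a b : P, a < b → ρ a < ρ b := by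
    intro a b hab
    obtain ⟨e⟩ := hupho a
    have h1 := rank_e a e ⟨b, hab.le⟩
    have hne : e ⟨b, hab.le⟩ ≠ ⊥ := by
      intro h
      have hle : (⟨b, hab.le⟩ : {q : P // a ≤ q}) ≤ ⟨a, le_rfl⟩ := by
        rw [← e.le_iff_le, h]; exact bot_le
      exact absurd (le_antisymm (Subtype.coe_le_coe.mpr hle) hab.le) hab.ne'
    have : ρ (e ⟨b, hab.le⟩) ≠ 0 := fun h => hne (rank0 _ h)
    simp only at h1
    omega
  -- covers from ≤ plus rank
  have cov_of_le : ∀ a b : P, a ≤ b → ρ b = ρ a + 1 → a ⋖ b := by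
    intro a b hle hr
    have hlt : a < b := lt_of_le_of_ne hle (by intro h; rw [h] at hr; omega)
    refine ⟨hlt, ?_⟩
    intro c hc1 hc2
    have := strict a c hc1
    have := strict c b hc2
    omega
  -- descend one cover
  have exists_cover_below : ∀ (j : ℕ) (z : P), ρ z = j + 1 → ∃ w, w ⋖ z ∧ ρ w = j := by
    intro j z hz
    have hne : z ≠ ⊥ := by intro h; rw [h, hρ0] at hz; omega
    obtain ⟨w, hw⟩ := hdown z hne
    have := hcov w z hw
    exact ⟨w, hw, by omega⟩
  -- the dominant element of rank k-1
  obtain ⟨y, hy_rk, hy_dom⟩ := hdom (k - 1) (by omega) (by omega)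
  -- the dominant element of rank 3
  obtain ⟨y₃, hy₃_rk, hy₃_dom⟩ := hdom 3 (by omega) hk
  -- M := join of covers of y
  obtain ⟨M, hM_lub, hM_card, hM_cov⟩ := hcore y
  -- two distinct covers of y
  have hfin' : Finite {q : P // y ⋖ q} :=
    Nat.finite_of_card_ne_zero (by rw [hM_card]; omega)
  have hnt : Nontrivial {q : P // y ⋖ q} := by
    rw [← Finite.one_lt_card_iff_nontrivial, hM_card]; omega
  obtain ⟨⟨a, ha⟩, ⟨b, hb⟩, hab'⟩ := hnt
  have hab : a ≠ b := fun h => hab' (by simpa using h)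
  have hρa : ρ a = k := by have := hcov y a ha; omega
  have hρb : ρ b = k := by have := hcov y b hb; omega
  have haM : a ⋖ M := hM_cov a ha
  have hρM : ρ M = k + 1 := by have := hcov a M haM; omega
  -- join of the two distinct covers is M
  have hsup : a ⊔ b = M := by
    have h1 : a ⊔ b ≤ M := sup_le (hM_lub.1 ha) (hM_lub.1 hb)
    have h2 : a < a ⊔ b := by
      rcases lt_or_eq_of_le (le_sup_left : a ≤ a ⊔ b) with h | h
      · exact h
      · exfalso
        have hba : b ≤ a := by rw [h]; exact le_sup_right
        rcases lt_or_eq_of_le hba with h' | h'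
        · exact ha.2 hb.1 h'
        · exact hab h'.symm
      
    have h3 := strict a (a ⊔ b) h2
    rcases lt_or_eq_of_le h1 with h | h
    · have := strict (a ⊔ b) M h
      omega
    · exact h
  refine ⟨M, hρM, ?_⟩
  intro z hz
  -- descend twice from z
  obtain ⟨w, hwz, hw⟩ := exists_cover_below (k - 1) z (by omega)
  obtain ⟨v, hvw, hv⟩ := exists_cover_below (k - 2) w (by omega)
  -- v is covered by y
  have hvy : v ⋖ y := hy_dom v (by omega)
  -- the filter at v
  obtain ⟨e⟩ := hupho v
  set D : P := (e.symm y₃ : P) with hD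
  have hDrk : ρ D = k + 1 := by
    have h1 := rank_e v e (e.symm y₃)
    rw [e.apply_symm_apply, hy₃_rk, ← hD] at h1
    omega
  -- D covers every rank-k element above v
  have hcovD : ∀ q : P, v ≤ q → ρ q = k → q ⋖ D := by
    intro q hq hqk
    have h1 := rank_e v e ⟨q, hq⟩
    have h2 : ρ (e ⟨q, hq⟩) = 2 := by simp only at h1; omega
    have h3 : e ⟨q, hq⟩ ⋖ y₃ := hy₃_dom _ (by omega)
    have h4 : e ⟨q, hq⟩ ⋖ e (e.symm y₃) := by rwa [e.apply_symm_apply]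
    have h5 : (⟨q, hq⟩ : {q : P // v ≤ q}) ⋖ e.symm y₃ := (apply_covBy_apply_iff e).mp h4
    exact filt_cov v _ _ h5
  -- a and b are above v, hence covered by D, hence M ≤ D, hence M = D
  have hva : v ≤ a := hvy.le.trans ha.le
  have hvb : v ≤ b := hvy.le.trans hb.le
  have hMD : M ≤ D := by
    rw [← hsup]
    exact sup_le (hcovD a hva hρa).le (hcovD b hvb hρb).le
  have hMeq : M = D := by
    rcases lt_or_eq_of_le hMD with h | h
    · have := strict M D h
      omega
    · exact h
  have hvz : v ≤ z := hvw.le.trans hwz.le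
  rw [hMeq]
  exact hcovD z hvz hz
end

section
/- For n ≥ 2 and a partition λ = (λ_1,…,λ_ℓ) of n, let f_λ : [n] → [n] be the idempotent function whose fibers are the consecutive blocks of sizes λ_1,…,λ_ℓ, each mapped to its largest element (so f_λ(1)=⋯=f_λ(λ_1)=λ_1, f_λ(λ_1+1)=⋯=f_λ(λ_1+λ_2)=λ_1+λ_2, etc.). In the poset (M(f_λ), ≤_L), the element s_m³ where m = λ_1+⋯+λ_t (for each 1 ≤ t ≤ ℓ) has rank 3 and covers exactly λ_t(n−1)+1 elements of rank 2, and every other rank-3 element covers exactly one rank-2 element. -/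
/-- Left divisibility in a monoid. -/
def leL {M : Type*} [Monoid M] (a b : M) : Prop := ∃ c, b = a * c

/-- The covering relation of the left-divisibility order. -/
def covL {M : Type*} [Monoid M] (a b : M) : Prop :=
  (leL a b ∧ a ≠ b) ∧ ∀ w : M, (leL a w ∧ a ≠ w) → (leL w b ∧ w ≠ b) → False


section Stmt17Aux
open Relation FreeMonoid
variable {n : ℕ} {f : Fin n → Fin n}

private def R1 (f : Fin n → Fin n) (u v : List (Fin n)) : Prop :=
  ∃ (p q : List (Fin n)) (i j : Fin n), u = p ++ i :: f i :: q ∧ v = p ++ j :: f j :: q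

private lemma R1.symm' {u v} (h : R1 f u v) : R1 f v u := by
  obtain ⟨p,q,i,j,hu,hv⟩ := h; exact ⟨p,q,j,i,hv,hu⟩

private lemma R1.length {u v} (h : R1 f u v) : u.length = v.length := by
  obtain ⟨p,q,i,j,hu,hv⟩ := h; subst hu hv; simp

private def rel (f : Fin n → Fin n) (u v : List (Fin n)) : Prop :=
  Relation.EqvGen (R1 f) u v

private lemma rel_length {u v} (h : rel f u v) : u.length = v.length := by
  induction h with
  | rel x y h => exact h.length
  | refl => rfl
  | symm x y _ ih => exact ih.symm
  | trans x y z _ _ ih1 ih2 => exact ih1.trans ih2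

private lemma rel_closed {S : Set (List (Fin n))} (hS : ∀ u ∈ S, ∀ v, R1 f u v → v ∈ S)
    {u v} (h : rel f u v) : u ∈ S ↔ v ∈ S := by
  induction h with
  | rel x y h => exact ⟨fun hx => hS _ hx _ h, fun hy => hS _ hy _ h.symm'⟩
  | refl => exact Iff.rfl
  | symm x y _ ih => exact ih.symm
  | trans x y z _ _ ih1 ih2 => exact ih1.trans ih2

private lemma rel_append_right {u u'} (h : rel f u u') (w : List (Fin n)) :
    rel f (u ++ w) (u' ++ w) := by
  induction h with
  | rel x y h => exact EqvGen.rel _ _ (by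
      obtain ⟨p,q,i,j,hx,hy⟩ := h
      exact ⟨p, q ++ w, i, j, by simp [hx], by simp [hy]⟩)
  | refl => exact EqvGen.refl _
  | symm x y _ ih => exact ih.symm _ _
  | trans x y z _ _ ih1 ih2 => exact ih1.trans _ _ _ ih2

private lemma rel_append_left {v v'} (h : rel f v v') (w : List (Fin n)) :
    rel f (w ++ v) (w ++ v') := by
  induction h with
  | rel x y h => exact EqvGen.rel _ _ (by
      obtain ⟨p,q,i,j,hx,hy⟩ := h
      exact ⟨w ++ p, q, i, j, by simp [hx], by simp [hy]⟩)
  | refl => exact EqvGen.refl _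
  | symm x y _ ih => exact ih.symm _ _
  | trans x y z _ _ ih1 ih2 => exact ih1.trans _ _ _ ih2

private def D (f : Fin n → Fin n) : Con (FreeMonoid (Fin n)) where
  r x y := rel f x.toList y.toList
  iseqv := ⟨fun _ => EqvGen.refl _, fun h => h.symm _ _, fun h h' => h.trans _ _ _ h'⟩
  mul' := fun {w x y z} h1 h2 => by
    show rel f (w*y).toList (x*z).toList
    rw [toList_mul, toList_mul]
    exact ((rel_append_right h1 _).trans _ _ _ (rel_append_left h2 _))

private lemma ofList_append' (l1 l2 : List (Fin n)) :
    ofList (l1 ++ l2) = ofList l1 * ofList l2 := rfl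

private lemma key (c : Con (FreeMonoid (Fin n)))
    (hc : c = conGen fun u v => ∃ i j : Fin n,
      u = FreeMonoid.of i * FreeMonoid.of (f i) ∧
      v = FreeMonoid.of j * FreeMonoid.of (f j)) (u v : List (Fin n)) :
    c.mk' (ofList u) = c.mk' (ofList v) ↔ rel f u v := by
  rw [Con.coe_mk']
  change (_ : c.Quotient) = _ ↔ _
  rw [Con.eq]
  constructor
  · intro h
    have hle : c ≤ D f := by
      rw [hc]
      apply Con.conGen_le.mpr
      rintro x y ⟨i, j, rfl, rfl⟩
      show rel f _ _
      refine EqvGen.rel _ _ ⟨[], [], i, j, ?_, ?_⟩ <;> rfl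
    have := hle h
    simpa [D, toList_ofList] using this
  · intro h
    induction h with
    | rel x y h =>
      obtain ⟨p,q,i,j,hx,hy⟩ := h
      subst hx hy
      have h1 : c (ofList [i, f i]) (ofList [j, f j]) := by
        rw [hc]
        exact ConGen.Rel.of _ _ ⟨i, j, rfl, rfl⟩
      have : c (ofList p * ofList [i, f i] * ofList q) (ofList p * ofList [j, f j] * ofList q) :=
        c.mul (c.mul (c.refl _) h1) (c.refl _)
      simpa [← ofList_append', mul_assoc] using this
    | refl x => exact c.refl _
    | symm x y _ ih => exact c.symm ih
    | trans x y z _ _ ih1 ih2 => exact c.trans ih1 ih2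

private lemma step2 {a b : Fin n} {v : List (Fin n)} (h : R1 f [a, b] v) :
    b = f a ∧ ∃ j, v = [j, f j] := by
  obtain ⟨p, q, i, j, hu, hv⟩ := h
  have hl := congrArg List.length hu
  simp only [List.length_append, List.length_cons, List.length_nil] at hl
  have hp : p = [] := List.length_eq_zero_iff.mp (by omega)
  have hq : q = [] := List.length_eq_zero_iff.mp (by omega)
  subst hp hq
  simp only [List.nil_append, List.cons.injEq, and_true] at hu
  obtain ⟨rfl, rfl⟩ := hu
  exact ⟨rfl, j, by simpa using hv⟩

private lemma step3 {a b cc : Fin n} {v : List (Fin n)} (h : R1 f [a, b, cc] v) :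
    (b = f a ∧ ∃ j, v = [j, f j, cc]) ∨ (cc = f b ∧ ∃ j, v = [a, j, f j]) := by
  obtain ⟨p, q, i, j, hu, hv⟩ := h
  have hl := congrArg List.length hu
  simp only [List.length_append, List.length_cons, List.length_nil] at hl
  rcases (show p.length = 0 ∨ p.length = 1 by omega) with hp | hp
  · have hp' : p = [] := List.length_eq_zero_iff.mp hp
    obtain ⟨x, hq⟩ := List.length_eq_one_iff.mp (show q.length = 1 by omega)
    subst hp' hq
    simp only [List.nil_append, List.cons.injEq, and_true] at hu
    obtain ⟨rfl, rfl, rfl⟩ := hu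
    exact Or.inl ⟨rfl, j, by simpa using hv⟩
  · obtain ⟨x, hp'⟩ := List.length_eq_one_iff.mp hp
    have hq : q = [] := List.length_eq_zero_iff.mp (by omega)
    subst hp' hq
    simp only [List.cons_append, List.nil_append, List.cons.injEq, and_true] at hu
    obtain ⟨rfl, rfl, rfl⟩ := hu
    exact Or.inr ⟨rfl, j, by simpa using hv⟩

private lemma rel_single2 {a b : Fin n} (hb : b ≠ f a) {v} (h : rel f [a, b] v) :
    v = [a, b] := by
  refine (rel_closed (S := {w | w = [a, b]}) ?_ h).mp rfl
  rintro u rfl v hv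
  exact absurd (step2 hv).1 hb

private def Sm (f : Fin n → Fin n) (m : Fin n) : Set (List (Fin n)) :=
  {w | (∃ j k, f j = m ∧ w = [j, k, f k]) ∨ (∃ j, w = [j, f j, m])}

private lemma rel_mmm_iff (hff : ∀ i, f (f i) = f i) {m : Fin n} (hm : f m = m) {v} :
    rel f [m, m, m] v ↔ v ∈ Sm f m := by
  constructor
  · intro h
    refine (rel_closed ?_ h).mp (Or.inr ⟨m, by rw [hm]⟩)
    rintro u (⟨j0, k0, hj0, rfl⟩ | ⟨j0, rfl⟩) v hv
    · rcases step3 hv with ⟨hb, j', rfl⟩ | ⟨_, j', rfl⟩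
      · exact Or.inr ⟨j', by rw [hb, hj0, hm]⟩
      · exact Or.inl ⟨j0, j', hj0, rfl⟩
    · rcases step3 hv with ⟨_, j', rfl⟩ | ⟨hcc, j', rfl⟩
      · exact Or.inr ⟨j', rfl⟩
      · exact Or.inl ⟨j0, j', (hcc.trans (hff j0)).symm, rfl⟩
  · rintro (⟨j, k, hj, rfl⟩ | ⟨j, rfl⟩)
    · have s1 : R1 f [j, k, f k] [j, m, m] := ⟨[j], [], k, m, rfl, by rw [hm]; rfl⟩
      have s2 : R1 f [j, m, m] [m, m, m] :=
        ⟨[], [m], j, m, by rw [hj]; rfl, by rw [hm]; rfl⟩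
      exact EqvGen.symm _ _ (EqvGen.trans _ _ _ (EqvGen.rel _ _ s1) (EqvGen.rel _ _ s2))
    · have s2 : R1 f [j, f j, m] [m, m, m] := ⟨[], [m], j, m, rfl, by rw [hm]; rfl⟩
      exact EqvGen.symm _ _ (EqvGen.rel _ _ s2)

private lemma rel_afc_iff (hff : ∀ i, f (f i) = f i) {c0 : Fin n} (hc0 : f c0 ≠ c0)
    (a : Fin n) {v} :
    rel f [a, f a, c0] v ↔ ∃ j, v = [j, f j, c0] := by
  constructor
  · intro h
    refine (rel_closed (S := {w | ∃ j, w = [j, f j, c0]}) ?_ h).mp ⟨a, rfl⟩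
    rintro u ⟨j0, rfl⟩ v hv
    rcases step3 hv with ⟨_, j', rfl⟩ | ⟨hcc, j', rfl⟩
    · exact ⟨j', rfl⟩
    · exact absurd (by rw [hcc, hff, ← hcc] : f c0 = c0) hc0
  · rintro ⟨j, rfl⟩
    exact EqvGen.rel _ _ ⟨[], [c0], a, j, rfl, rfl⟩

private lemma rel_single3 {a b cc : Fin n} (hb : b ≠ f a) (hcc : cc ≠ f b) {v}
    (h : rel f [a, b, cc] v) : v = [a, b, cc] := by
  refine (rel_closed (S := {w | w = [a, b, cc]}) ?_ h).mp rfl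
  rintro u rfl v hv
  rcases step3 hv with ⟨hb', _⟩ | ⟨hcc', _⟩
  · exact absurd hb' hb
  · exact absurd hcc' hcc

private lemma mkc_surj {c : Con (FreeMonoid (Fin n))} (y : c.Quotient) :
    ∃ u : List (Fin n), y = c.mk' (ofList u) := by
  obtain ⟨x, hx⟩ := Con.mk'_surjective (c := c) y
  exact ⟨x.toList, by rw [ofList_toList]; exact hx.symm⟩

private lemma mkc_mul (c : Con (FreeMonoid (Fin n))) (u v : List (Fin n)) :
    c.mk' (ofList (u ++ v)) = c.mk' (ofList u) * c.mk' (ofList v) :=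
  map_mul c.mk' (ofList u) (ofList v)

private lemma mkc_nil (c : Con (FreeMonoid (Fin n))) :
    c.mk' (ofList ([] : List (Fin n))) = 1 := map_one c.mk'

private lemma cov_iff {c : Con (FreeMonoid (Fin n))}
    (hcKey : ∀ u v : List (Fin n), c.mk' (ofList u) = c.mk' (ofList v) ↔ rel f u v)
    {w : List (Fin n)} (hw : w.length = 3) (y : c.Quotient) :
    covL y (c.mk' (ofList w)) ↔
      ∃ (u : List (Fin n)) (x : Fin n),
        y = c.mk' (ofList u) ∧ u.length = 2 ∧ rel f (u ++ [x]) w := by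
  constructor
  · rintro ⟨⟨⟨cc, hz⟩, hne⟩, hcov⟩
    obtain ⟨u, rfl⟩ := mkc_surj y
    obtain ⟨v, rfl⟩ := mkc_surj cc
    have hz' : c.mk' (ofList (u ++ v)) = c.mk' (ofList w) := by
      rw [mkc_mul]; exact hz.symm
    have hrel := (hcKey _ _).mp hz'
    have hlen : u.length + v.length = 3 := by
      have := rel_length hrel
      simp only [List.length_append] at this
      omega
    have hvne : v ≠ [] := by
      rintro rfl
      exact hne (by rw [hz, mkc_nil, mul_one])
    rcases v with _ | ⟨x, v'⟩
    · exact absurd rfl hvne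
    rcases v' with _ | ⟨x', v''⟩
    · exact ⟨u, x, rfl, by simpa using hlen, hrel⟩
    · exfalso
      refine hcov (c.mk' (ofList (u ++ [x]))) ⟨⟨c.mk' (ofList [x]), (mkc_mul c u [x]).symm⟩, ?_⟩
        ⟨⟨c.mk' (ofList (x' :: v'')), ?_⟩, ?_⟩
      · intro h
        have := rel_length ((hcKey _ _).mp h)
        simp at this
      · rw [← mkc_mul]
        rw [show u ++ [x] ++ x' :: v'' = u ++ x :: x' :: v'' from by simp]
        exact hz'.symm
      · intro h
        have := rel_length ((hcKey _ _).mp h)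
        simp only [List.length_append, List.length_cons, List.length_nil] at this hlen hw
        omega
  · rintro ⟨u, x, rfl, hu2, hrel⟩
    have hz : c.mk' (ofList w) = c.mk' (ofList u) * c.mk' (ofList [x]) := by
      rw [← mkc_mul]; exact ((hcKey _ _).mpr hrel).symm
    refine ⟨⟨⟨_, hz⟩, ?_⟩, ?_⟩
    · intro h
      have := rel_length ((hcKey _ _).mp h)
      omega
    · rintro w' ⟨⟨d, hd⟩, hne1⟩ ⟨⟨e, he⟩, hne2⟩
      obtain ⟨vd, rfl⟩ := mkc_surj d
      obtain ⟨ve, rfl⟩ := mkc_surj e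
      have hvd : vd ≠ [] := by
        rintro rfl
        exact hne1 (by rw [hd, mkc_nil, mul_one])
      have hve : ve ≠ [] := by
        rintro rfl
        exact hne2 (by rw [he, mkc_nil, mul_one])
      have hweq : c.mk' (ofList (u ++ vd ++ ve)) = c.mk' (ofList w) := by
        rw [mkc_mul, mkc_mul, ← hd, ← he]
      have := rel_length ((hcKey _ _).mp hweq)
      simp only [List.length_append] at this
      have h1 : 0 < vd.length := List.length_pos_iff.mpr hvd
      have h2 : 0 < ve.length := List.length_pos_iff.mpr hve
      omega

private lemma list_len2 {α : Type*} {u : List α} (h : u.length = 2) :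
    ∃ a b, u = [a, b] := by
  rcases u with _ | ⟨a, _ | ⟨b, _ | ⟨x, u⟩⟩⟩ <;> simp_all
  
private lemma list_len3 {α : Type*} {u : List α} (h : u.length = 3) :
    ∃ a b cc, u = [a, b, cc] := by
  rcases u with _ | ⟨a, _ | ⟨b, _ | ⟨x, _ | ⟨d, u⟩⟩⟩⟩ <;> simp_all

end Stmt17Aux

section Stmt17Blocks
variable {n : ℕ} {lam : List ℕ} {f : Fin n → Fin n}

private lemma A_succ (hpos : ∀ a ∈ lam, 0 < a) {t} (ht : t < lam.length) :
    (lam.take (t+1)).sum = (lam.take t).sum + lam.get ⟨t, ht⟩ := by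
  rw [List.sum_take_succ _ _ ht]; rfl

private lemma A_lt (hpos : ∀ a ∈ lam, 0 < a) {t} (ht : t < lam.length) :
    (lam.take t).sum < (lam.take (t+1)).sum := by
  rw [A_succ hpos ht]
  have := hpos _ (lam.get_mem ⟨t, ht⟩)
  omega

private lemma A_step (hpos : ∀ a ∈ lam, 0 < a) (t : ℕ) :
    (lam.take t).sum ≤ (lam.take (t+1)).sum := by
  rcases lt_or_ge t lam.length with h | h
  · exact (A_lt hpos h).le
  · rw [List.take_of_length_le h, List.take_of_length_le (by omega)]

private lemma A_mono (hpos : ∀ a ∈ lam, 0 < a) : Monotone (fun t => (lam.take t).sum) :=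
  monotone_nat_of_le_succ (A_step hpos)

private lemma A_len (hsum : lam.sum = n) : (lam.take lam.length).sum = n := by
  rw [List.take_length]; exact hsum

private lemma exists_block (hn : 2 ≤ n) (hpos : ∀ a ∈ lam, 0 < a) (hsum : lam.sum = n)
    (i : Fin n) :
    ∃ t, t < lam.length ∧ (lam.take t).sum ≤ (i : ℕ) ∧ (i : ℕ) < (lam.take (t+1)).sum := by
  have hlen : 0 < lam.length := by
    rcases lam with _ | ⟨a, l⟩
    · simp at hsum; omega
    · simp
  have hex : ∃ t, (i : ℕ) < (lam.take (t+1)).sum :=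
    ⟨lam.length - 1, by rw [Nat.sub_add_cancel hlen, A_len hsum]; exact i.isLt⟩
  classical
  refine ⟨Nat.find hex, ?_, ?_, Nat.find_spec hex⟩
  · have : Nat.find hex ≤ lam.length - 1 :=
      Nat.find_min' hex (by rw [Nat.sub_add_cancel hlen, A_len hsum]; exact i.isLt)
    omega
  · rcases h0 : Nat.find hex with _ | s
    · simp
    · have hmin := Nat.find_min hex (show s < Nat.find hex by omega)
      push_neg at hmin
      exact hmin

variable (hn : 2 ≤ n) (hpos : ∀ a ∈ lam, 0 < a) (hsum : lam.sum = n)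
    (hf : ∀ (t : ℕ), t < lam.length → ∀ i : Fin n,
      (lam.take t).sum ≤ (i : ℕ) → (i : ℕ) < (lam.take (t + 1)).sum →
      ((f i : ℕ) = (lam.take (t + 1)).sum - 1))

include hpos hf in
private lemma fixed_of {t : ℕ} (ht : t < lam.length) {m : Fin n}
    (hm : (m : ℕ) = (lam.take (t+1)).sum - 1) : f m = m := by
  have h1 := A_lt hpos ht
  have hb1 : (lam.take t).sum ≤ (m : ℕ) := by omega
  have hb2 : (m : ℕ) < (lam.take (t+1)).sum := by omega
  have := hf t ht m hb1 hb2
  exact Fin.ext (by omega)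

include hn hpos hsum hf in
private lemma f_form (i : Fin n) :
    ∃ t, t < lam.length ∧ ((f i : ℕ) = (lam.take (t+1)).sum - 1) := by
  obtain ⟨t, ht, h1, h2⟩ := exists_block hn hpos hsum i
  exact ⟨t, ht, hf t ht i h1 h2⟩

include hn hpos hsum hf in
private lemma f_idem : ∀ i, f (f i) = f i := by
  intro i
  obtain ⟨t, ht, h⟩ := f_form hn hpos hsum hf i
  exact fixed_of hpos hf ht h

include hn hpos hsum hf in
private lemma fixed_form {m : Fin n} (hm : f m = m) :
    ∃ t, t < lam.length ∧ (m : ℕ) = (lam.take (t+1)).sum - 1 := by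
  obtain ⟨t, ht, h⟩ := f_form hn hpos hsum hf m
  rw [hm] at h
  exact ⟨t, ht, h⟩

include hpos in
private lemma block_inj {t t' : ℕ} (ht : t < lam.length) (ht' : t' < lam.length)
    (h : (lam.take (t+1)).sum - 1 = (lam.take (t'+1)).sum - 1) : t = t' := by
  have h1 := A_lt hpos ht
  have h2 := A_lt hpos ht'
  by_contra hne
  rcases lt_or_gt_of_ne hne with hlt | hlt
  · have := A_mono hpos (show t+1 ≤ t' by omega)
    simp only at this; omega
  · have := A_mono hpos (show t'+1 ≤ t by omega)
    simp only at this; omega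

include hn hpos hsum hf in
private lemma fiber_eq {t : ℕ} (ht : t < lam.length) {m : Fin n}
    (hm : (m : ℕ) = (lam.take (t+1)).sum - 1) (j : Fin n) :
    f j = m ↔ ((lam.take t).sum ≤ (j : ℕ) ∧ (j : ℕ) < (lam.take (t+1)).sum) := by
  constructor
  · intro h
    obtain ⟨t', ht', h1, h2⟩ := exists_block hn hpos hsum j
    have hv := hf t' ht' j h1 h2
    have : t' = t := block_inj hpos ht' ht (by rw [← hv, h, hm])
    subst this
    exact ⟨h1, h2⟩
  · rintro ⟨h1, h2⟩
    exact Fin.ext (by rw [hf t ht j h1 h2, hm])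

private lemma card_interval (a b : ℕ) (hb : b ≤ n) :
    Nat.card {j : Fin n // a ≤ (j : ℕ) ∧ (j : ℕ) < b} = b - a := by
  classical
  rw [Nat.card_eq_fintype_card, Fintype.card_subtype, ← Nat.card_Ico a b]
  refine Finset.card_bij' (fun j _ => (j : ℕ))
    (fun x hx => ⟨x, lt_of_lt_of_le (Finset.mem_Ico.mp hx).2 hb⟩) ?_ ?_ ?_ ?_
  · intro j hj
    simp only [Finset.mem_filter] at hj
    exact Finset.mem_Ico.mpr hj.2
  · intro x hx
    simp only [Finset.mem_filter, Finset.mem_univ, true_and]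
    exact Finset.mem_Ico.mp hx
  · intro j hj; rfl
  · intro x hx; rfl

include hn hpos hsum hf in
private lemma card_fiber {t : ℕ} (ht : t < lam.length) {m : Fin n}
    (hm : (m : ℕ) = (lam.take (t+1)).sum - 1) :
    Nat.card {j : Fin n // f j = m} = lam.get ⟨t, ht⟩ := by
  have heq : Nat.card {j : Fin n // f j = m}
      = Nat.card {j : Fin n // (lam.take t).sum ≤ (j : ℕ) ∧ (j : ℕ) < (lam.take (t+1)).sum} :=
    Nat.card_congr (Equiv.subtypeEquivRight (fiber_eq hn hpos hsum hf ht hm))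
  have hbn : (lam.take (t+1)).sum ≤ n := by
    have h2 := A_mono hpos (show t+1 ≤ lam.length by omega)
    simp only at h2
    rw [List.take_length] at h2
    omega
  rw [heq, card_interval ((lam.take t).sum) ((lam.take (t+1)).sum) hbn, A_succ hpos ht]
  omega

private lemma card_ne (m : Fin n) : Nat.card {k : Fin n // k ≠ m} = n - 1 := by
  rw [Nat.card_eq_fintype_card]
  exact (Fintype.card_subtype_compl (· = m)).trans
    (by rw [Fintype.card_subtype_eq, Fintype.card_fin])

end Stmt17Blocks

/-- In `(M(f_λ), ≤_L)` for the idempotent function `f_λ` associated to a partition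
`λ ⊢ n`, the rank-3 element `s_m³` where `m = λ_1 + ⋯ + λ_t` covers exactly
`λ_t(n-1) + 1` rank-2 elements, and every other rank-3 element covers exactly one
rank-2 element. -/
theorem stmt17 (n : ℕ) (hn : 2 ≤ n) (lam : List ℕ)
    (hpos : ∀ a ∈ lam, 0 < a) (hsum : lam.sum = n) (hsort : lam.Pairwise (· ≥ ·))
    (f : Fin n → Fin n)
    (hf : ∀ (t : ℕ), t < lam.length → ∀ i : Fin n,
      (lam.take t).sum ≤ (i : ℕ) → (i : ℕ) < (lam.take (t + 1)).sum →
      ((f i : ℕ) = (lam.take (t + 1)).sum - 1))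
    (c : Con (FreeMonoid (Fin n)))
    (hc : c = conGen fun u v => ∃ i j : Fin n,
      u = FreeMonoid.of i * FreeMonoid.of (f i) ∧
      v = FreeMonoid.of j * FreeMonoid.of (f j)) :
    -- the distinguished rank-3 elements and their lower cover counts
    (∀ (t : ℕ) (ht : t < lam.length) (m : Fin n), (m : ℕ) = (lam.take (t + 1)).sum - 1 →
      (∃ w : List (Fin n), c.mk' (FreeMonoid.ofList w) = c.mk' (FreeMonoid.ofList [m, m, m])
          ∧ w.length = 3) ∧
      Nat.card {y : c.Quotient // covL y (c.mk' (FreeMonoid.ofList [m, m, m]))}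
        = lam.get ⟨t, ht⟩ * (n - 1) + 1) ∧
    -- every other rank-3 element covers exactly one rank-2 element
    (∀ z : c.Quotient,
      (∃ w : List (Fin n), c.mk' (FreeMonoid.ofList w) = z ∧ w.length = 3) →
      (∀ (t : ℕ), t < lam.length → ∀ m : Fin n, (m : ℕ) = (lam.take (t + 1)).sum - 1 →
        z ≠ c.mk' (FreeMonoid.ofList [m, m, m])) →
      Nat.card {y : c.Quotient // covL y z} = 1) := by
  classical
  have hcKey := key c hc
  have hff : ∀ i, f (f i) = f i := f_idem hn hpos hsum hf
  constructor
  · rintro t ht m hm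
    have hfm : f m = m := fixed_of hpos hf ht hm
    refine ⟨⟨[m, m, m], rfl, rfl⟩, ?_⟩
    have hset : {y : c.Quotient | covL y (c.mk' (FreeMonoid.ofList [m, m, m]))} =
        insert (c.mk' (FreeMonoid.ofList [m, m]))
          ((fun p : Fin n × Fin n => c.mk' (FreeMonoid.ofList [p.1, p.2])) ''
            {p : Fin n × Fin n | f p.1 = m ∧ p.2 ≠ m}) := by
      ext y
      simp only [Set.mem_setOf_eq, Set.mem_insert_iff, Set.mem_image]
      rw [cov_iff hcKey (w := [m, m, m]) rfl]
      constructor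
      · rintro ⟨u, x, rfl, hu2, hrel⟩
        have hmem : (u ++ [x]) ∈ Sm f m :=
          (rel_mmm_iff hff hfm).mp (Relation.EqvGen.symm _ _ hrel)
        obtain ⟨a, b, rfl⟩ := list_len2 hu2
        rcases hmem with ⟨j, k, hj, hw⟩ | ⟨j, hw⟩
        · simp only [List.cons_append, List.nil_append, List.cons.injEq, and_true] at hw
          obtain ⟨h1, h2, h3⟩ := hw
          by_cases hbm : b = m
          · left
            apply (hcKey _ _).mpr
            exact Relation.EqvGen.rel _ _
              ⟨[], [], a, m, by rw [h1, hj, ← hbm]; rfl, by rw [hfm]; rfl⟩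
          · right
            exact ⟨(a, b), ⟨by rw [h1]; exact hj, hbm⟩, rfl⟩
        · simp only [List.cons_append, List.nil_append, List.cons.injEq, and_true] at hw
          obtain ⟨h1, h2, h3⟩ := hw
          left
          apply (hcKey _ _).mpr
          exact Relation.EqvGen.rel _ _ ⟨[], [], a, m, by rw [h2, h1]; rfl, by rw [hfm]; rfl⟩
      · rintro (rfl | ⟨⟨a, b⟩, ⟨ha, hb⟩, rfl⟩)
        · exact ⟨[m, m], m, rfl, rfl, Relation.EqvGen.refl _⟩
        · refine ⟨[a, b], f b, rfl, rfl, ?_⟩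
          exact Relation.EqvGen.symm _ _
            ((rel_mmm_iff hff hfm).mpr (Or.inl ⟨a, b, ha, rfl⟩))
    have hTfin : (((fun p : Fin n × Fin n => c.mk' (FreeMonoid.ofList [p.1, p.2])) ''
        {p : Fin n × Fin n | f p.1 = m ∧ p.2 ≠ m})).Finite :=
      (Set.toFinite _).image _
    have hnotmem : c.mk' (FreeMonoid.ofList [m, m]) ∉
        ((fun p : Fin n × Fin n => c.mk' (FreeMonoid.ofList [p.1, p.2])) ''
          {p : Fin n × Fin n | f p.1 = m ∧ p.2 ≠ m}) := by
      rintro ⟨⟨a, b⟩, ⟨ha, hb⟩, hab⟩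
      have hrel := (hcKey _ _).mp hab
      have := rel_single2 (show b ≠ f a by rw [ha]; exact hb) hrel
      simp only [List.cons.injEq, and_true] at this
      exact hb this.2.symm
    have hinj : Set.InjOn (fun p : Fin n × Fin n => c.mk' (FreeMonoid.ofList [p.1, p.2]))
        {p : Fin n × Fin n | f p.1 = m ∧ p.2 ≠ m} := by
      rintro ⟨a, b⟩ ⟨ha, hb⟩ ⟨a', b'⟩ ⟨ha', hb'⟩ h
      have hrel := (hcKey _ _).mp h
      have := rel_single2 (show b ≠ f a by rw [ha]; exact hb) hrel
      simp only [List.cons.injEq, and_true] at this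
      obtain ⟨h1, h2⟩ := this
      simp [h1, h2]
    have hcoe : Nat.card {y : c.Quotient // covL y (c.mk' (FreeMonoid.ofList [m, m, m]))}
        = Set.ncard {y : c.Quotient | covL y (c.mk' (FreeMonoid.ofList [m, m, m]))} :=
      Nat.card_coe_set_eq _
    rw [hcoe, hset, Set.ncard_insert_of_notMem hnotmem hTfin,
      Set.ncard_image_of_injOn hinj]
    have hprod : {p : Fin n × Fin n | f p.1 = m ∧ p.2 ≠ m}
        = {j : Fin n | f j = m} ×ˢ {k : Fin n | k ≠ m} := by
      ext ⟨a, b⟩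
      simp [Set.mem_prod]
    rw [hprod, ← Nat.card_coe_set_eq,
      Nat.card_congr (Equiv.Set.prod {j : Fin n | f j = m} {k : Fin n | k ≠ m}),
      Nat.card_prod]
    have c1 : Nat.card {j : Fin n | f j = m} = lam.get ⟨t, ht⟩ :=
      card_fiber hn hpos hsum hf ht hm
    have c2 : Nat.card {k : Fin n | k ≠ m} = n - 1 := card_ne m
    rw [c1, c2]
  · rintro z ⟨w, hwz, hw3⟩ hexcl
    obtain ⟨a, b, cc, rfl⟩ := list_len3 hw3
    subst hwz
    by_cases hcb : cc = f b
    · exfalso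
      have hrel : rel f [a, b, cc] [f a, f a, f a] := by
        subst hcb
        refine Relation.EqvGen.trans _ _ _
          (Relation.EqvGen.rel _ _ ⟨[a], [], b, f a, rfl, by rw [hff]; rfl⟩)
          (Relation.EqvGen.rel _ _ ⟨[], [f a], a, f a, rfl, by rw [hff]; rfl⟩)
      obtain ⟨t, ht, hform⟩ := f_form hn hpos hsum hf a
      exact hexcl t ht (f a) hform ((hcKey _ _).mpr hrel)
    by_cases hba : b = f a
    · by_cases hccf : f cc = cc
      · exfalso
        have hrel : rel f [a, b, cc] [cc, cc, cc] := by
          subst hba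
          exact Relation.EqvGen.rel _ _ ⟨[], [cc], a, cc, rfl, by rw [hccf]; rfl⟩
        obtain ⟨t, ht, hform⟩ := fixed_form hn hpos hsum hf hccf
        exact hexcl t ht cc hform ((hcKey _ _).mpr hrel)
      · subst hba
        have hset : {y : c.Quotient | covL y (c.mk' (FreeMonoid.ofList [a, f a, cc]))}
            = {c.mk' (FreeMonoid.ofList [a, f a])} := by
          ext y
          simp only [Set.mem_setOf_eq, Set.mem_singleton_iff]
          rw [cov_iff hcKey (w := [a, f a, cc]) rfl]
          constructor
          · rintro ⟨u, x, rfl, hu2, hrel⟩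
            obtain ⟨j, hv⟩ := (rel_afc_iff hff hccf a).mp (Relation.EqvGen.symm _ _ hrel)
            obtain ⟨a', b', rfl⟩ := list_len2 hu2
            simp only [List.cons_append, List.nil_append, List.cons.injEq, and_true] at hv
            obtain ⟨h1, h2, h3⟩ := hv
            apply (hcKey _ _).mpr
            exact Relation.EqvGen.rel _ _ ⟨[], [], a', a, by rw [h2, h1]; rfl, rfl⟩
          · rintro rfl
            exact ⟨[a, f a], cc, rfl, rfl, Relation.EqvGen.refl _⟩
        have hcoe : Nat.card {y : c.Quotient //
            covL y (c.mk' (FreeMonoid.ofList [a, f a, cc]))}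
            = Set.ncard {y : c.Quotient |
              covL y (c.mk' (FreeMonoid.ofList [a, f a, cc]))} :=
          Nat.card_coe_set_eq _
        rw [hcoe, hset, Set.ncard_singleton]
    · have hset : {y : c.Quotient | covL y (c.mk' (FreeMonoid.ofList [a, b, cc]))}
          = {c.mk' (FreeMonoid.ofList [a, b])} := by
        ext y
        simp only [Set.mem_setOf_eq, Set.mem_singleton_iff]
        rw [cov_iff hcKey (w := [a, b, cc]) rfl]
        constructor
        · rintro ⟨u, x, rfl, hu2, hrel⟩
          have hv := rel_single3 hba hcb (Relation.EqvGen.symm _ _ hrel)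
          obtain ⟨a', b', rfl⟩ := list_len2 hu2
          simp only [List.cons_append, List.nil_append, List.cons.injEq, and_true] at hv
          obtain ⟨h1, h2, h3⟩ := hv
          rw [h1, h2]
        · rintro rfl
          exact ⟨[a, b], cc, rfl, rfl, Relation.EqvGen.refl _⟩
      have hcoe : Nat.card {y : c.Quotient //
          covL y (c.mk' (FreeMonoid.ofList [a, b, cc]))}
          = Set.ncard {y : c.Quotient |
            covL y (c.mk' (FreeMonoid.ofList [a, b, cc]))} :=
        Nat.card_coe_set_eq _
      rw [hcoe, hset, Set.ncard_singleton]
end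

section
/- Let λ and ν be two distinct partitions of n ≥ 2, and let f_λ, f_ν : [n] → [n] be the associated idempotent functions (fibers are consecutive blocks of sizes given by the parts, each sent to its largest element). Then the posets (M(f_λ), ≤_L) and (M(f_ν), ≤_L) are not isomorphic. -/
namespace Stmt18

section NF

variable {n : ℕ}

/-- Normal form for words of length ≤ 3 in `M(f)`. `z` is a fixed canonical index. -/
def nf (f : Fin n → Fin n) (z : Fin n) : List (Fin n) → List (Fin n)
  | [a, b] => if b = f a then [z, f z] else [a, b]
  | [a, b, c] =>
      if c = f b then [f a, f a, f a]
      else if b = f a then (if f c = c then [c, c, c] else [z, f z, c])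
      else [a, b, c]
  | l => l

variable (f : Fin n → Fin n) (z : Fin n)

lemma nf_nil : nf f z [] = [] := rfl
lemma nf_one (a : Fin n) : nf f z [a] = [a] := rfl
lemma nf_pair (a b : Fin n) :
    nf f z [a, b] = if b = f a then [z, f z] else [a, b] := rfl
lemma nf_triple (a b c : Fin n) :
    nf f z [a, b, c] = if c = f b then [f a, f a, f a]
      else if b = f a then (if f c = c then [c, c, c] else [z, f z, c])
      else [a, b, c] := rfl

lemma nf_length (l : List (Fin n)) : (nf f z l).length = l.length := by
  match l with
  | [] => rfl
  | [a] => rfl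
  | [a, b] => rw [nf_pair]; split_ifs <;> rfl
  | [a, b, c] => rw [nf_triple]; split_ifs <;> rfl
  | a :: b :: c :: d :: tl => rfl

variable (hf : ∀ i, f (f i) = f i)
include hf

lemma nf_suf (a b : Fin n) : nf f z [a, b, f b] = [f a, f a, f a] := by
  rw [nf_triple, if_pos rfl]

lemma nf_aD (a c : Fin n) :
    nf f z [a, f a, c] = if f c = c then [c, c, c] else [z, f z, c] := by
  rw [nf_triple, hf]
  by_cases h1 : c = f a
  · have h3 : f c = c := by rw [h1]; exact hf a
    rw [if_pos h1, if_pos h3, h1]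
  · rw [if_neg h1, if_pos rfl]

lemma nf_idem (l : List (Fin n)) : nf f z (nf f z l) = nf f z l := by
  match l with
  | [] => rfl
  | [a] => rfl
  | [a, b] =>
      rw [nf_pair]; split_ifs with h
      · rw [nf_pair, if_pos rfl]
      · rw [nf_pair, if_neg h]
  | [a, b, c] =>
      rw [nf_triple]; split_ifs with h1 h2 h3
      · rw [show [f a, f a, f a] = [f a, f a, f (f a)] by rw [hf], nf_suf f z hf, hf]
      · rw [show [c, c, c] = [c, c, f c] by rw [h3], nf_suf f z hf, h3]
      · have h3' : f c ≠ c := h3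
        rw [show [z, f z, c] = [z, f z, c] from rfl, nf_aD f z hf, if_neg h3']
      · rw [nf_triple, if_neg h1, if_neg h2]
  | a :: b :: c :: d :: tl => rfl

lemma nf_cons (a : Fin n) (v : List (Fin n)) (hv : v.length = 2) :
    nf f z (a :: nf f z v) = nf f z (a :: v) := by
  match v with
  | [b, c] =>
      rw [nf_pair]; split_ifs with h
      · subst h
        show nf f z [a, z, f z] = nf f z [a, b, f b]
        rw [nf_suf f z hf, nf_suf f z hf]
      · rfl

lemma nf_concat (u : List (Fin n)) (hu : u.length = 2) (c : Fin n) :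
    nf f z (nf f z u ++ [c]) = nf f z (u ++ [c]) := by
  match u with
  | [a, b] =>
      rw [nf_pair]; split_ifs with h
      · subst h
        show nf f z [z, f z, c] = nf f z [a, f a, c]
        rw [show ([z, f z, c] : List (Fin n)) = [z, f z, c] from rfl, nf_aD f z hf,
          nf_aD f z hf]
      · rfl

lemma nf_append (u v : List (Fin n)) (h : u.length + v.length ≤ 3) :
    nf f z (u ++ v) = nf f z (nf f z u ++ nf f z v) := by
  match u, v with
  | [], v => rw [List.nil_append, nf_nil, List.nil_append, nf_idem f z hf]
  | u, [] => rw [List.append_nil, nf_nil, List.append_nil, nf_idem f z hf]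
  | [a], [b] => rfl
  | [a], [b, c] =>
      rw [nf_one]
      exact (nf_cons f z hf a [b, c] rfl).symm
  | [a, b], [c] =>
      rw [nf_one]
      exact (nf_concat f z hf [a, b] rfl c).symm
  | [a], b :: c :: d :: tl =>
      simp only [List.length_cons, List.length_nil] at h; omega
  | [a, b], c :: d :: tl =>
      simp only [List.length_cons, List.length_nil] at h; omega
  | [a, b, c], d :: tl =>
      simp only [List.length_cons, List.length_nil] at h; omega
  | a :: b :: c :: d :: tl, e :: tl' =>
      simp only [List.length_cons, List.length_nil] at h; omega

end NF

end Stmt18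

/-- Strict left divisibility. -/
def ltL {M : Type*} [Monoid M] (a b : M) : Prop := leL a b ∧ ¬ leL b a

/-- "Rank 3" expressed purely in terms of left divisibility. -/
def P3 {M : Type*} [Monoid M] (q : M) : Prop :=
  (∃ a0 a1 a2, ltL a0 a1 ∧ ltL a1 a2 ∧ ltL a2 q) ∧
    ¬(∃ a0 a1 a2 a3, ltL a0 a1 ∧ ltL a1 a2 ∧ ltL a2 a3 ∧ ltL a3 q)

/-- Number of left divisors. -/
noncomputable def NL {M : Type*} [Monoid M] (q : M) : ℕ := {a | leL a q}.ncard

namespace Stmt18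

section MonoidSec

variable {n : ℕ}

/-- The truncated-normal-form congruence. -/
def E (f : Fin n → Fin n) (z : Fin n) (hkey : ∀ u v : List (Fin n),
    u.length + v.length ≤ 3 → nf f z (u ++ v) = nf f z (nf f z u ++ nf f z v)) :
    Con (FreeMonoid (Fin n)) where
  r u v := (FreeMonoid.toList u).length = (FreeMonoid.toList v).length ∧
    ((FreeMonoid.toList u).length ≤ 3 →
      nf f z (FreeMonoid.toList u) = nf f z (FreeMonoid.toList v))
  iseqv := by
    constructor
    · exact fun x => ⟨rfl, fun _ => rfl⟩
    · rintro x y ⟨h1, h2⟩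
      exact ⟨h1.symm, fun h => (h2 (h1 ▸ h)).symm⟩
    · rintro x y zz ⟨h1, h2⟩ ⟨h3, h4⟩
      exact ⟨h1.trans h3, fun h => (h2 h).trans (h4 (h1 ▸ h))⟩
  mul' := by
    rintro a b c d ⟨h1, h2⟩ ⟨h3, h4⟩
    show (FreeMonoid.toList a ++ FreeMonoid.toList c).length =
        (FreeMonoid.toList b ++ FreeMonoid.toList d).length ∧
      ((FreeMonoid.toList a ++ FreeMonoid.toList c).length ≤ 3 →
        nf f z (FreeMonoid.toList a ++ FreeMonoid.toList c) =
          nf f z (FreeMonoid.toList b ++ FreeMonoid.toList d))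
    rw [List.length_append, List.length_append]
    refine ⟨by omega, fun h => ?_⟩
    have ha3 : (FreeMonoid.toList a).length ≤ 3 := by omega
    have hc3 : (FreeMonoid.toList c).length ≤ 3 := by omega
    rw [hkey _ _ h, h2 ha3, h4 hc3, ← hkey _ _ (by omega)]

/-- The generating relation. -/
def R (f : Fin n → Fin n) : FreeMonoid (Fin n) → FreeMonoid (Fin n) → Prop :=
  fun u v => ∃ i j : Fin n,
    u = FreeMonoid.of i * FreeMonoid.of (f i) ∧ v = FreeMonoid.of j * FreeMonoid.of (f j)

variable (cl : Con (FreeMonoid (Fin n)))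

/-- The class of a word in the quotient. -/
def mk (l : List (Fin n)) : cl.Quotient :=
  ((FreeMonoid.ofList l : FreeMonoid (Fin n)) : cl.Quotient)

lemma mk_eq_mk {u v : List (Fin n)} :
    mk cl u = mk cl v ↔ cl (FreeMonoid.ofList u) (FreeMonoid.ofList v) := Con.eq _

lemma mk_mul (u v : List (Fin n)) : mk cl (u ++ v) = mk cl u * mk cl v := by
  rw [mk, FreeMonoid.ofList_append, Con.coe_mul]; rfl

lemma mk_surj (q : cl.Quotient) : ∃ l, q = mk cl l := by
  obtain ⟨w, hw⟩ := Con.mk'_surjective (c := cl) q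
  exact ⟨FreeMonoid.toList w, hw.symm⟩

lemma one_eq_mk : (1 : cl.Quotient) = mk cl [] := rfl

variable (f : Fin n → Fin n) (z : Fin n)
variable (hcl : cl = conGen (R f)) (hf : ∀ i, f (f i) = f i)

set_option linter.unusedSectionVars false
include z hcl hf

lemma cl_le_E : ∀ u v, cl u v →
    (FreeMonoid.toList u).length = (FreeMonoid.toList v).length ∧
    ((FreeMonoid.toList u).length ≤ 3 →
      nf f z (FreeMonoid.toList u) = nf f z (FreeMonoid.toList v)) := by
  intro u v h
  have hle : conGen (R f) ≤ E f z (nf_append f z hf) := by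
    apply Con.conGen_le.mpr
    rintro x y ⟨i, j, hx, hy⟩
    subst hx; subst hy
    constructor
    · rfl
    · intro _
      show nf f z [i, f i] = nf f z [j, f j]
      rw [nf_pair, if_pos rfl, nf_pair, if_pos rfl]
  rw [hcl] at h
  exact hle h

lemma cl_len {u v} (h : cl u v) :
    (FreeMonoid.toList u).length = (FreeMonoid.toList v).length :=
  (cl_le_E cl f z hcl hf u v h).1

lemma cl_nf {u v} (h : cl u v) (h3 : (FreeMonoid.toList u).length ≤ 3) :
    nf f z (FreeMonoid.toList u) = nf f z (FreeMonoid.toList v) :=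
  (cl_le_E cl f z hcl hf u v h).2 h3

lemma cl_base (i j : Fin n) :
    cl (FreeMonoid.ofList [i, f i]) (FreeMonoid.ofList [j, f j]) := by
  rw [hcl]
  exact ConGen.Rel.of _ _ ⟨i, j, rfl, rfl⟩

lemma cl_nf_self (l : List (Fin n)) (h : l.length ≤ 3) :
    cl (FreeMonoid.ofList l) (FreeMonoid.ofList (nf f z l)) := by
  match l with
  | [] => exact cl.refl _
  | [a] => exact cl.refl _
  | [a, b] =>
      rw [nf_pair]; split_ifs with h1
      · subst h1; exact cl_base cl f z hcl hf a z
      · exact cl.refl _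
  | [a, b, c] =>
      rw [nf_triple]; split_ifs with h1 h2 h3
      · subst h1
        have s1 : cl (FreeMonoid.ofList [a, b, f b]) (FreeMonoid.ofList [a, f a, f a]) := by
          have := cl.mul (cl.refl (FreeMonoid.of a)) (cl_base cl f z hcl hf b (f a))
          simpa [hf, mul_assoc] using this
        have s2 : cl (FreeMonoid.ofList [a, f a, f a]) (FreeMonoid.ofList [f a, f a, f a]) := by
          have := cl.mul (cl_base cl f z hcl hf a (f a)) (cl.refl (FreeMonoid.of (f a)))
          simpa [hf, mul_assoc] using this
        exact cl.trans s1 s2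
      · subst h2
        have := cl.mul (cl_base cl f z hcl hf a c) (cl.refl (FreeMonoid.of c))
        simpa [h3, mul_assoc] using this
      · subst h2
        have := cl.mul (cl_base cl f z hcl hf a z) (cl.refl (FreeMonoid.of c))
        simpa [mul_assoc] using this
      · exact cl.refl _

lemma cl_of_nf {u v : List (Fin n)} (hu : u.length ≤ 3)
    (hnf : nf f z u = nf f z v) : mk cl u = mk cl v := by
  have hv : v.length ≤ 3 := by
    have h1 := nf_length f z u
    have h2 := nf_length f z v
    have : (nf f z u).length = (nf f z v).length := by rw [hnf]
    omega
  rw [mk_eq_mk]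
  exact cl.trans (cl_nf_self cl f z hcl hf u hu)
    (hnf ▸ (cl.symm (cl_nf_self cl f z hcl hf v hv)))

lemma mk_eq_mk_short {u v : List (Fin n)} (hu : u.length ≤ 3) :
    mk cl u = mk cl v ↔ (u.length = v.length ∧ nf f z u = nf f z v) := by
  constructor
  · intro h
    rw [mk_eq_mk] at h
    exact ⟨cl_len cl f z hcl hf h, cl_nf cl f z hcl hf h hu⟩
  · rintro ⟨-, h2⟩
    exact cl_of_nf cl f z hcl hf hu h2

/-- Degree (word length) function on the quotient. -/
def Deg (q : cl.Quotient) : ℕ :=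
  Quotient.liftOn q (fun w => (FreeMonoid.toList w).length)
    (fun _ _ h => cl_len cl f z hcl hf h)

lemma Deg_mk (l : List (Fin n)) : Deg cl f z hcl hf (mk cl l) = l.length := rfl

omit z hcl hf in
lemma leL_mk_iff (u : List (Fin n)) (q : cl.Quotient) :
    leL (mk cl u) q ↔ ∃ v, q = mk cl (u ++ v) := by
  constructor
  · rintro ⟨c, rfl⟩
    obtain ⟨v, rfl⟩ := mk_surj cl c
    exact ⟨v, (mk_mul cl u v).symm⟩
  · rintro ⟨v, rfl⟩
    exact ⟨mk cl v, mk_mul cl u v⟩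

omit z hcl hf in
lemma leL_take (l : List (Fin n)) (j k : ℕ) (hjk : j ≤ k) :
    leL (mk cl (l.take j)) (mk cl (l.take k)) := by
  refine ⟨mk cl ((l.take k).drop j), ?_⟩
  rw [← mk_mul]
  congr 1
  conv_lhs => rw [← List.take_append_drop j (l.take k), List.take_take, min_eq_left hjk]

lemma leL_deg {a b : cl.Quotient} (h : leL a b) :
    Deg cl f z hcl hf a ≤ Deg cl f z hcl hf b := by
  obtain ⟨u, rfl⟩ := mk_surj cl a
  rw [leL_mk_iff] at h
  obtain ⟨v, rfl⟩ := h
  simp only [Deg_mk, List.length_append]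
  omega

lemma eq_of_leL_deg {a b : cl.Quotient} (h : leL a b)
    (hd : Deg cl f z hcl hf a = Deg cl f z hcl hf b) : a = b := by
  obtain ⟨u, rfl⟩ := mk_surj cl a
  rw [leL_mk_iff] at h
  obtain ⟨v, rfl⟩ := h
  simp only [Deg_mk, List.length_append] at hd
  have : v = [] := List.eq_nil_of_length_eq_zero (by omega)
  subst this
  rw [List.append_nil]

lemma ltL_iff_deg {a b : cl.Quotient} :
    ltL a b ↔ leL a b ∧ Deg cl f z hcl hf a < Deg cl f z hcl hf b := by
  constructor
  · rintro ⟨h1, h2⟩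
    refine ⟨h1, lt_of_le_of_ne (leL_deg cl f z hcl hf h1) fun hd => h2 ?_⟩
    rw [eq_of_leL_deg cl f z hcl hf h1 hd]
    exact ⟨1, (mul_one _).symm⟩
  · rintro ⟨h1, h2⟩
    refine ⟨h1, fun h3 => ?_⟩
    exact absurd (leL_deg cl f z hcl hf h3) (by omega)

lemma P3_iff_deg (q : cl.Quotient) : P3 q ↔ Deg cl f z hcl hf q = 3 := by
  obtain ⟨l, rfl⟩ := mk_surj cl q
  rw [Deg_mk]
  have hchain : ∀ j k : ℕ, j < k → k ≤ l.length →
      ltL (mk cl (l.take j)) (mk cl (l.take k)) := by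
    intro j k hjk hk
    rw [ltL_iff_deg cl f z hcl hf]
    refine ⟨leL_take cl l j k hjk.le, ?_⟩
    simp only [Deg_mk, List.length_take]
    omega
  constructor
  · rintro ⟨⟨a0, a1, a2, h01, h12, h2q⟩, hno4⟩
    have d01 := ((ltL_iff_deg cl f z hcl hf).mp h01).2
    have d12 := ((ltL_iff_deg cl f z hcl hf).mp h12).2
    have d2q := ((ltL_iff_deg cl f z hcl hf).mp h2q).2
    rw [Deg_mk] at d2q
    by_contra hne
    have h4 : 4 ≤ l.length := by omega
    refine hno4 ⟨mk cl (l.take 0), mk cl (l.take 1), mk cl (l.take 2), mk cl (l.take 3),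
      hchain 0 1 (by omega) (by omega), hchain 1 2 (by omega) (by omega),
      hchain 2 3 (by omega) (by omega), ?_⟩
    have := hchain 3 l.length (by omega) le_rfl
    rwa [List.take_length] at this
  · intro hlen
    constructor
    · refine ⟨mk cl (l.take 0), mk cl (l.take 1), mk cl (l.take 2), ?_, ?_, ?_⟩
      · exact hchain 0 1 (by omega) (by omega)
      · exact hchain 1 2 (by omega) (by omega)
      · have := hchain 2 l.length (by omega) le_rfl
        rwa [List.take_length] at this
    · rintro ⟨a0, a1, a2, a3, h01, h12, h23, h3q⟩
      have d01 := ((ltL_iff_deg cl f z hcl hf).mp h01).2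
      have d12 := ((ltL_iff_deg cl f z hcl hf).mp h12).2
      have d23 := ((ltL_iff_deg cl f z hcl hf).mp h23).2
      have d3q := ((ltL_iff_deg cl f z hcl hf).mp h3q).2
      rw [Deg_mk] at d3q
      omega

lemma leL_mk3 {l : List (Fin n)} (hl : l.length ≤ 3) (a : cl.Quotient) :
    leL a (mk cl l) ↔ ∃ u v : List (Fin n), a = mk cl u ∧ (u ++ v).length = l.length ∧
      nf f z (u ++ v) = nf f z l := by
  constructor
  · intro h
    obtain ⟨u, rfl⟩ := mk_surj cl a
    rw [leL_mk_iff] at h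
    obtain ⟨v, hv⟩ := h
    obtain ⟨h1, h2⟩ := (mk_eq_mk_short cl f z hcl hf hl).mp hv
    exact ⟨u, v, rfl, h1.symm, h2.symm⟩
  · rintro ⟨u, v, rfl, hlen, hnf⟩
    rw [leL_mk_iff]
    exact ⟨v, ((mk_eq_mk_short cl f z hcl hf (by omega)).mpr ⟨by omega, hnf⟩).symm⟩

/-- The divisor-witness finset for `x_m = ⟦[m,m,m]⟧`. -/
def Tm (m : Fin n) : Finset (List (Fin n)) :=
  {[]} ∪ Finset.univ.image (fun a : Fin n => [a]) ∪ {[z, f z]} ∪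
    ((Finset.univ.filter (fun x => f x = m)) ×ˢ (Finset.univ.erase m)).image
      (fun p => [p.1, p.2]) ∪ {[m, m, m]}

omit hcl hf in
lemma mem_Tm {m : Fin n} {x : List (Fin n)} :
    x ∈ Tm f z m ↔ x = [] ∨ (∃ a, x = [a]) ∨ x = [z, f z] ∨
      (∃ a b, f a = m ∧ b ≠ m ∧ x = [a, b]) ∨ x = [m, m, m] := by
  simp only [Tm, Finset.mem_union, Finset.mem_singleton, Finset.mem_image,
    Finset.mem_product, Finset.mem_filter, Finset.mem_univ, true_and, Finset.mem_erase,
    Prod.exists]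
  aesop

omit hcl in
lemma nf_mmm {m : Fin n} (hm : f m = m) : nf f z [m, m, m] = [m, m, m] := by
  have := nf_suf f z hf m m
  rw [hm] at this
  exact this

lemma divisors_xm (m : Fin n) (hm : f m = m) :
    {a : cl.Quotient | leL a (mk cl [m, m, m])} = mk cl '' ↑(Tm f z m) := by
  ext q
  simp only [Set.mem_setOf_eq, Set.mem_image, Finset.mem_coe]
  rw [leL_mk3 cl f z hcl hf (by norm_num)]
  constructor
  · rintro ⟨u, v, rfl, hlen, hnf⟩
    rw [nf_mmm f z hf hm] at hnf
    simp only [List.length_append, List.length_cons, List.length_nil] at hlen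
    match u, v with
    | [], v => exact ⟨[], (mem_Tm f z).mpr (Or.inl rfl), rfl⟩
    | [a], v => exact ⟨[a], (mem_Tm f z).mpr (Or.inr (Or.inl ⟨a, rfl⟩)), rfl⟩
    | [x, y], [c] =>
        rw [show ([x, y] ++ [c] : List (Fin n)) = [x, y, c] from rfl, nf_triple] at hnf
        split_ifs at hnf with h1 h2 h3
        · -- [f x, f x, f x] = [m,m,m]
          simp only [List.cons.injEq, and_true] at hnf
          by_cases hy : y = m
          · subst hy
            refine ⟨[z, f z], (mem_Tm f z).mpr (Or.inr (Or.inr (Or.inl rfl))), ?_⟩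
            refine (cl_of_nf cl f z hcl hf (by norm_num) ?_).symm
            rw [nf_pair, if_pos hnf.1.symm, nf_pair, if_pos rfl]
          · refine ⟨[x, y], (mem_Tm f z).mpr (Or.inr (Or.inr (Or.inr (Or.inl
              ⟨x, y, hnf.1, hy, rfl⟩)))), ?_⟩
            rfl
        · -- y = f x, [c,c,c] = [m,m,m]
          refine ⟨[z, f z], (mem_Tm f z).mpr (Or.inr (Or.inr (Or.inl rfl))), ?_⟩
          refine (cl_of_nf cl f z hcl hf (by norm_num) ?_).symm
          rw [nf_pair, if_pos h2, nf_pair, if_pos rfl]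
        · -- [z, f z, c] = [m,m,m] with f c ≠ c : impossible
          simp only [List.cons.injEq, and_true] at hnf
          obtain ⟨h4, h5, h6⟩ := hnf
          exact absurd (by rw [h6, ← h4, h5, h4] : f c = c) h3
        · -- [x,y,c] = [m,m,m] with y ≠ f x : impossible
          simp only [List.cons.injEq, and_true] at hnf
          obtain ⟨rfl, rfl, rfl⟩ := hnf
          exact absurd hm.symm h2
    | [x, y, c], [] =>
        refine ⟨[m, m, m], (mem_Tm f z).mpr (Or.inr (Or.inr (Or.inr (Or.inr rfl)))), ?_⟩
        refine (cl_of_nf cl f z hcl hf (by norm_num) ?_).symm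
        rw [List.append_nil] at hnf
        rw [nf_mmm f z hf hm]
        exact hnf
    | x :: y :: c :: d :: tl, v => simp at hlen; omega
    | [x,y], [] => simp at hlen
    | [x,y], (c :: d :: tl) => simp at hlen; omega
  · rintro ⟨t, ht, rfl⟩
    rcases (mem_Tm f z).mp ht with h | ⟨a, h⟩ | h | ⟨a, b, h1, h2, h⟩ | h <;> subst h
    · exact ⟨[], [m, m, m], rfl, rfl, rfl⟩
    · refine ⟨[a], [f a, m], rfl, rfl, ?_⟩
      show nf f z [a, f a, m] = _
      rw [nf_aD f z hf, if_pos hm, nf_mmm f z hf hm]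
    · refine ⟨[z, f z], [m], rfl, rfl, ?_⟩
      show nf f z [z, f z, m] = _
      rw [nf_aD f z hf, if_pos hm, nf_mmm f z hf hm]
    · refine ⟨[a, b], [f b], rfl, rfl, ?_⟩
      show nf f z [a, b, f b] = _
      rw [nf_suf f z hf, h1, nf_mmm f z hf hm]
    · exact ⟨[m, m, m], [], rfl, rfl, rfl⟩

omit hcl in
lemma nf_zc {c : Fin n} (hc : f c ≠ c) : nf f z [z, f z, c] = [z, f z, c] := by
  rw [nf_aD f z hf, if_neg hc]

/-- Divisor-witness finset for `⟦[z, f z, c]⟧`. -/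
def TD (c : Fin n) : Finset (List (Fin n)) :=
  {[]} ∪ Finset.univ.image (fun a : Fin n => [a]) ∪ {[z, f z]} ∪ {[z, f z, c]}

omit hcl hf in
lemma mem_TD {c : Fin n} {x : List (Fin n)} :
    x ∈ TD f z c ↔ x = [] ∨ (∃ a, x = [a]) ∨ x = [z, f z] ∨ x = [z, f z, c] := by
  simp only [TD, Finset.mem_union, Finset.mem_singleton, Finset.mem_image,
    Finset.mem_univ, true_and]
  aesop

lemma divisors_D (c : Fin n) (hc : f c ≠ c) :
    {a : cl.Quotient | leL a (mk cl [z, f z, c])} = mk cl '' ↑(TD f z c) := by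
  ext q
  simp only [Set.mem_setOf_eq, Set.mem_image, Finset.mem_coe]
  rw [leL_mk3 cl f z hcl hf (by norm_num)]
  constructor
  · rintro ⟨u, v, rfl, hlen, hnf⟩
    rw [nf_zc f z hf hc] at hnf
    simp only [List.length_append, List.length_cons, List.length_nil] at hlen
    match u, v with
    | [], v => exact ⟨[], (mem_TD f z).mpr (Or.inl rfl), rfl⟩
    | [a], v => exact ⟨[a], (mem_TD f z).mpr (Or.inr (Or.inl ⟨a, rfl⟩)), rfl⟩
    | [x, y], [c0] =>
        rw [show ([x, y] ++ [c0] : List (Fin n)) = [x, y, c0] from rfl, nf_triple] at hnf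
        split_ifs at hnf with h1 h2 h3
        · simp only [List.cons.injEq, and_true] at hnf
          obtain ⟨e1, e2, e3⟩ := hnf
          exact absurd (by rw [← e3, hf, e3] : f c = c) hc
        · simp only [List.cons.injEq, and_true] at hnf
          obtain ⟨e1, e2, e3⟩ := hnf
          exact absurd (by rw [← e3, h3, e3] : f c = c) hc
        · simp only [List.cons.injEq, and_true] at hnf
          refine ⟨[z, f z], (mem_TD f z).mpr (Or.inr (Or.inr (Or.inl rfl))), ?_⟩
          refine (cl_of_nf cl f z hcl hf (by norm_num) ?_).symm
          rw [nf_pair, if_pos h2, nf_pair, if_pos rfl]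
        · simp only [List.cons.injEq, and_true] at hnf
          obtain ⟨e1, e2, e3⟩ := hnf
          exact absurd (by rw [e2, e1] : y = f x) h2
    | [x, y, c0], [] =>
        refine ⟨[z, f z, c], (mem_TD f z).mpr (Or.inr (Or.inr (Or.inr rfl))), ?_⟩
        refine (cl_of_nf cl f z hcl hf (by norm_num) ?_).symm
        rw [List.append_nil] at hnf
        rw [nf_zc f z hf hc]
        exact hnf
    | x :: y :: c0 :: d :: tl, v => simp at hlen; omega
    | [x, y], [] => simp at hlen
    | [x, y], (c0 :: d :: tl) => simp at hlen; omega
  · rintro ⟨t, ht, rfl⟩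
    rcases (mem_TD f z).mp ht with h | ⟨a, h⟩ | h | h <;> subst h
    · exact ⟨[], [z, f z, c], rfl, rfl, rfl⟩
    · refine ⟨[a], [f a, c], rfl, rfl, ?_⟩
      show nf f z [a, f a, c] = _
      rw [nf_aD f z hf, if_neg hc, nf_zc f z hf hc]
    · refine ⟨[z, f z], [c], rfl, rfl, ?_⟩
      show nf f z [z, f z, c] = _
      rw [nf_zc f z hf hc]
    · exact ⟨[z, f z, c], [], rfl, rfl, rfl⟩

omit hcl in
lemma nf_gen {a b c : Fin n} (hb : b ≠ f a) (hc : c ≠ f b) :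
    nf f z [a, b, c] = [a, b, c] := by
  rw [nf_triple, if_neg hc, if_neg hb]

lemma divisors_gen (a b c : Fin n) (hb : b ≠ f a) (hc : c ≠ f b) :
    {q : cl.Quotient | leL q (mk cl [a, b, c])} =
      mk cl '' ↑({[], [a], [a, b], [a, b, c]} : Finset (List (Fin n))) := by
  ext q
  simp only [Set.mem_setOf_eq, Set.mem_image, Finset.mem_coe, Finset.mem_insert,
    Finset.mem_singleton]
  rw [leL_mk3 cl f z hcl hf (by norm_num)]
  constructor
  · rintro ⟨u, v, rfl, hlen, hnf⟩
    rw [nf_gen f z hf hb hc] at hnf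
    simp only [List.length_append, List.length_cons, List.length_nil] at hlen
    match u, v with
    | [], v => exact ⟨[], Or.inl rfl, rfl⟩
    | [x], [y0, y1] =>
        rw [show ([x] ++ [y0, y1] : List (Fin n)) = [x, y0, y1] from rfl, nf_triple] at hnf
        split_ifs at hnf with h1 h2 h3
        · simp only [List.cons.injEq, and_true] at hnf
          obtain ⟨e1, e2, e3⟩ := hnf
          exact absurd (by rw [← e1, hf, e2] : f a = b).symm hb
        · simp only [List.cons.injEq, and_true] at hnf
          obtain ⟨e1, e2, e3⟩ := hnf
          exact absurd (by rw [← e1, h3, e2] : f a = b).symm hb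
        · simp only [List.cons.injEq, and_true] at hnf
          obtain ⟨e1, e2, e3⟩ := hnf
          exact absurd (by rw [← e2, ← e1] : b = f a) hb
        · simp only [List.cons.injEq, and_true] at hnf
          exact ⟨[x], Or.inr (Or.inl (by rw [hnf.1])), rfl⟩
    | [x, y], [c0] =>
        rw [show ([x, y] ++ [c0] : List (Fin n)) = [x, y, c0] from rfl, nf_triple] at hnf
        split_ifs at hnf with h1 h2 h3
        · simp only [List.cons.injEq, and_true] at hnf
          obtain ⟨e1, e2, e3⟩ := hnf
          exact absurd (by rw [← e1, hf, e2] : f a = b).symm hb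
        · simp only [List.cons.injEq, and_true] at hnf
          obtain ⟨e1, e2, e3⟩ := hnf
          exact absurd (by rw [← e1, h3, e2] : f a = b).symm hb
        · simp only [List.cons.injEq, and_true] at hnf
          obtain ⟨e1, e2, e3⟩ := hnf
          exact absurd (by rw [← e2, ← e1] : b = f a) hb
        · simp only [List.cons.injEq, and_true] at hnf
          exact ⟨[x, y], Or.inr (Or.inr (Or.inl (by rw [hnf.1, hnf.2.1]))), rfl⟩
    | [x, y, c0], [] =>
        refine ⟨[a, b, c], Or.inr (Or.inr (Or.inr rfl)), ?_⟩
        refine (cl_of_nf cl f z hcl hf (by norm_num) ?_).symm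
        rw [List.append_nil] at hnf
        rw [nf_gen f z hf hb hc]
        exact hnf
    | x :: y :: c0 :: d :: tl, v => simp at hlen; omega
    | [x], [] => simp at hlen
    | [x], [y0] => simp at hlen
    | [x], (y0 :: y1 :: y2 :: tl) => simp at hlen; omega
    | [x, y], [] => simp at hlen
    | [x, y], (c0 :: d :: tl) => simp at hlen; omega
  · rintro ⟨t, (h | h | h | h), rfl⟩ <;> subst h
    · exact ⟨[], [a, b, c], rfl, rfl, rfl⟩
    · exact ⟨[a], [b, c], rfl, rfl, rfl⟩
    · exact ⟨[a, b], [c], rfl, rfl, rfl⟩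
    · exact ⟨[a, b, c], [], rfl, rfl, rfl⟩

lemma injOn_mk_of_nf_fixed (T : Finset (List (Fin n))) (hlen : ∀ x ∈ T, x.length ≤ 3)
    (hfix : ∀ x ∈ T, nf f z x = x) : Set.InjOn (mk cl) ↑T := by
  intro x hx y hy hxy
  obtain ⟨-, h2⟩ := (mk_eq_mk_short cl f z hcl hf (hlen x hx)).mp hxy
  rw [hfix x hx, hfix y hy] at h2
  exact h2

omit z hcl hf in
lemma pair_inj : Function.Injective (fun p : Fin n × Fin n => [p.1, p.2]) := by
  rintro ⟨a, b⟩ ⟨c, d⟩ h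
  simp only [List.cons.injEq, and_true] at h
  simp [Prod.ext_iff, h.1, h.2]

omit hcl hf in
lemma card_Tm (m : Fin n) :
    (Tm f z m).card = (Finset.univ.filter (fun i => f i = m)).card * (n - 1) + (n + 3) := by
  rw [Tm]
  rw [Finset.card_union_of_disjoint (by
    rw [Finset.disjoint_singleton_right]
    simp only [Finset.mem_union, Finset.mem_singleton, Finset.mem_image, Finset.mem_univ,
      true_and, Finset.mem_product, Finset.mem_filter, Finset.mem_erase, Prod.exists]
    push_neg
    refine ⟨⟨⟨by simp, by simp⟩, by simp⟩, ?_⟩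
    rintro a b - h
    simp at h)]
  rw [Finset.card_union_of_disjoint (by
    rw [Finset.disjoint_left]
    intro x hx hx4
    simp only [Finset.mem_image, Finset.mem_product, Finset.mem_filter, Finset.mem_univ,
      true_and, Finset.mem_erase, Prod.exists] at hx4
    obtain ⟨a, b, ⟨h1, h2, -⟩, h3⟩ := hx4
    simp only [Finset.mem_union, Finset.mem_singleton, Finset.mem_image, Finset.mem_univ,
      true_and] at hx
    rcases hx with (h | ⟨a', h⟩) | h
    · rw [← h3] at h; simp at h
    · rw [← h3] at h; simp at h
    · rw [← h3] at h
      simp only [List.cons.injEq, and_true] at h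
      obtain ⟨e1, e2⟩ := h
      rw [← e1, h1] at e2
      exact h2 e2)]
  rw [Finset.card_union_of_disjoint (by
    rw [Finset.disjoint_singleton_right]
    simp only [Finset.mem_union, Finset.mem_singleton, Finset.mem_image, Finset.mem_univ,
      true_and]
    push_neg
    exact ⟨by simp, by rintro a h; simp at h⟩)]
  rw [Finset.card_union_of_disjoint (by
    rw [Finset.disjoint_singleton_left]
    simp only [Finset.mem_image, Finset.mem_univ, true_and]
    rintro ⟨a, h⟩
    simp at h)]
  rw [Finset.card_image_of_injective _ (pair_inj), Finset.card_image_of_injective _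
    (fun a b h => by simpa using h : Function.Injective (fun a : Fin n => [a]))]
  rw [Finset.card_product, Finset.card_erase_of_mem (Finset.mem_univ m)]
  simp only [Finset.card_singleton, Finset.card_univ, Fintype.card_fin]
  omega

omit hcl in
lemma Tm_nf_fixed (m : Fin n) (hm : f m = m) :
    ∀ x ∈ Tm f z m, nf f z x = x := by
  intro x hx
  rcases (mem_Tm f z).mp hx with h | ⟨a, h⟩ | h | ⟨a, b, h1, h2, h⟩ | h <;> subst h
  · rfl
  · rfl
  · rw [nf_pair, if_pos rfl]
  · rw [nf_pair, if_neg (by rw [h1]; exact h2)]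
  · exact nf_mmm f z hf hm

omit hcl hf in
lemma Tm_len (m : Fin n) : ∀ x ∈ Tm f z m, x.length ≤ 3 := by
  intro x hx
  rcases (mem_Tm f z).mp hx with h | ⟨a, h⟩ | h | ⟨a, b, h1, h2, h⟩ | h <;> subst h <;> simp

lemma NL_xm (m : Fin n) (hm : f m = m) :
    NL (mk cl [m, m, m]) =
      (Finset.univ.filter (fun i => f i = m)).card * (n - 1) + (n + 3) := by
  rw [NL, divisors_xm cl f z hcl hf m hm,
    Set.ncard_image_of_injOn (injOn_mk_of_nf_fixed cl f z hcl hf _ (Tm_len f z m)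
      (Tm_nf_fixed f z hf m hm)),
    Set.ncard_coe_finset, card_Tm f z m]

omit hcl in
lemma TD_nf_fixed (c : Fin n) (hc : f c ≠ c) :
    ∀ x ∈ TD f z c, nf f z x = x := by
  intro x hx
  rcases (mem_TD f z).mp hx with h | ⟨a, h⟩ | h | h <;> subst h
  · rfl
  · rfl
  · rw [nf_pair, if_pos rfl]
  · exact nf_zc f z hf hc

omit hcl hf in
lemma card_TD (c : Fin n) : (TD f z c).card = n + 3 := by
  rw [TD]
  rw [Finset.card_union_of_disjoint (by
    rw [Finset.disjoint_singleton_right]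
    simp only [Finset.mem_union, Finset.mem_singleton, Finset.mem_image, Finset.mem_univ,
      true_and]
    push_neg
    exact ⟨⟨by simp, by rintro a h; simp at h⟩, by simp⟩)]
  rw [Finset.card_union_of_disjoint (by
    rw [Finset.disjoint_singleton_right]
    simp only [Finset.mem_union, Finset.mem_singleton, Finset.mem_image, Finset.mem_univ,
      true_and]
    push_neg
    exact ⟨by simp, by rintro a h; simp at h⟩)]
  rw [Finset.card_union_of_disjoint (by
    rw [Finset.disjoint_singleton_left]
    simp only [Finset.mem_image, Finset.mem_univ, true_and]
    rintro ⟨a, h⟩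
    simp at h)]
  rw [Finset.card_image_of_injective _
    (fun a b h => by simpa using h : Function.Injective (fun a : Fin n => [a]))]
  simp only [Finset.card_singleton, Finset.card_univ, Fintype.card_fin]
  omega

lemma NL_D (c : Fin n) (hc : f c ≠ c) : NL (mk cl [z, f z, c]) = n + 3 := by
  rw [NL, divisors_D cl f z hcl hf c hc,
    Set.ncard_image_of_injOn (injOn_mk_of_nf_fixed cl f z hcl hf _
      (by intro x hx; rcases (mem_TD f z).mp hx with h | ⟨a, h⟩ | h | h <;> subst h <;> simp)
      (TD_nf_fixed f z hf c hc)),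
    Set.ncard_coe_finset, card_TD f z c]

lemma NL_gen (a b c : Fin n) (hb : b ≠ f a) (hc : c ≠ f b) :
    NL (mk cl [a, b, c]) = 4 := by
  rw [NL, divisors_gen cl f z hcl hf a b c hb hc,
    Set.ncard_image_of_injOn (injOn_mk_of_nf_fixed cl f z hcl hf _
      (by intro x hx; simp only [Finset.mem_insert, Finset.mem_singleton] at hx
          rcases hx with h | h | h | h <;> subst h <;> simp)
      (by intro x hx; simp only [Finset.mem_insert, Finset.mem_singleton] at hx
          rcases hx with h | h | h | h <;> subst h
          · rfl
          · rfl
          · rw [nf_pair, if_neg hb]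
          · exact nf_gen f z hf hb hc)),
    Set.ncard_coe_finset]
  rw [Finset.card_insert_of_notMem (by simp), Finset.card_insert_of_notMem (by simp),
    Finset.card_insert_of_notMem (by simp), Finset.card_singleton]

lemma deg3_cases (q : cl.Quotient) (hq : Deg cl f z hcl hf q = 3) :
    (∃ m, f m = m ∧ q = mk cl [m, m, m]) ∨ (∃ c, f c ≠ c ∧ q = mk cl [z, f z, c]) ∨
      (∃ a b c, b ≠ f a ∧ c ≠ f b ∧ q = mk cl [a, b, c]) := by
  obtain ⟨l, rfl⟩ := mk_surj cl q
  rw [Deg_mk] at hq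
  match l with
  | [a, b, c] =>
    by_cases h1 : c = f b
    · subst h1
      refine Or.inl ⟨f a, hf a, ?_⟩
      exact cl_of_nf cl f z hcl hf (by norm_num)
        (by rw [nf_suf f z hf, nf_mmm f z hf (hf a)])
    · by_cases h2 : b = f a
      · subst h2
        by_cases h3 : f c = c
        · refine Or.inl ⟨c, h3, ?_⟩
          exact cl_of_nf cl f z hcl hf (by norm_num)
            (by rw [nf_aD f z hf, if_pos h3, nf_mmm f z hf h3])
        · exact Or.inr (Or.inl ⟨c, h3, cl_of_nf cl f z hcl hf (by norm_num)
            (by rw [nf_aD f z hf, if_neg h3, nf_zc f z hf h3])⟩)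
      · exact Or.inr (Or.inr ⟨a, b, c, h2, h1, rfl⟩)
  | [] => simp at hq
  | [a] => simp at hq
  | [a, b] => simp at hq
  | a :: b :: c :: d :: tl => simp at hq

lemma xm_inj {m m' : Fin n} (hm : f m = m) (hm' : f m' = m')
    (h : mk cl [m, m, m] = mk cl [m', m', m']) : m = m' := by
  obtain ⟨-, h2⟩ := (mk_eq_mk_short cl f z hcl hf (by norm_num)).mp h
  rw [nf_mmm f z hf hm, nf_mmm f z hf hm'] at h2
  simp only [List.cons.injEq, and_true] at h2
  exact h2.1

lemma count_main (hn : 2 ≤ n) (v : ℕ) (hv : 1 ≤ v) :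
    {q : cl.Quotient | P3 q ∧ NL q = v * (n - 1) + (n + 3)}.ncard =
      (Finset.univ.filter (fun m : Fin n => f m = m ∧
        (Finset.univ.filter (fun i => f i = m)).card = v)).card := by
  have hvn : 1 ≤ v * (n - 1) := Nat.one_le_iff_ne_zero.mpr (Nat.mul_ne_zero (by omega) (by omega))
  have hset : {q : cl.Quotient | P3 q ∧ NL q = v * (n - 1) + (n + 3)} =
      (fun m => mk cl [m, m, m]) '' ↑(Finset.univ.filter (fun m : Fin n => f m = m ∧
        (Finset.univ.filter (fun i => f i = m)).card = v)) := by
    ext q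
    simp only [Set.mem_setOf_eq, Set.mem_image, Finset.mem_coe, Finset.mem_filter,
      Finset.mem_univ, true_and]
    constructor
    · rintro ⟨hp3, hnl⟩
      have hdeg := (P3_iff_deg cl f z hcl hf q).mp hp3
      rcases deg3_cases cl f z hcl hf q hdeg with ⟨m, hm, rfl⟩ | ⟨c, hc, rfl⟩ |
        ⟨a, b, c, hb, hc, rfl⟩
      · rw [NL_xm cl f z hcl hf m hm] at hnl
        have heq : (Finset.univ.filter (fun i => f i = m)).card * (n - 1) = v * (n - 1) := by
          omega
        have hfib := Nat.eq_of_mul_eq_mul_right (show 0 < n - 1 by omega) heq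
        exact ⟨m, ⟨hm, hfib⟩, rfl⟩
      · rw [NL_D cl f z hcl hf c hc] at hnl
        omega
      · rw [NL_gen cl f z hcl hf a b c hb hc] at hnl
        omega
    · rintro ⟨m, ⟨hm, hfib⟩, rfl⟩
      refine ⟨(P3_iff_deg cl f z hcl hf _).mpr (Deg_mk cl f z hcl hf [m, m, m]),
        by rw [NL_xm cl f z hcl hf m hm, hfib]⟩
  rw [hset, Set.ncard_image_of_injOn (fun x hx y hy hxy => xm_inj cl f z hcl hf
    (Finset.mem_filter.mp hx).2.1 (Finset.mem_filter.mp hy).2.1 hxy),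
    Set.ncard_coe_finset]

end MonoidSec

section Partition

variable {n : ℕ} (L : List ℕ) (f : Fin n → Fin n)
variable (hpos : ∀ a ∈ L, 0 < a) (hsum : L.sum = n)
variable (hfl : ∀ t, t < L.length → ∀ i : Fin n, (L.take t).sum ≤ (i : ℕ) →
  (i : ℕ) < (L.take (t + 1)).sum → ((f i : ℕ) = (L.take (t + 1)).sum - 1))

omit f in
lemma s_mono {a b : ℕ} (hab : a ≤ b) : (L.take a).sum ≤ (L.take b).sum := by
  refine (monotone_nat_of_le_succ (f := fun t => (L.take t).sum) ?_) hab
  intro t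
  show (L.take t).sum ≤ (L.take (t + 1)).sum
  by_cases ht : t < L.length
  · rw [List.sum_take_succ _ _ ht]
    omega
  · rw [List.take_of_length_le (by omega), List.take_of_length_le (by omega)]

omit f in
include hpos in
lemma s_strict {t : ℕ} (ht : t < L.length) : (L.take t).sum < (L.take (t + 1)).sum := by
  rw [List.sum_take_succ _ _ ht]
  have := hpos (L.get ⟨t, ht⟩) (List.get_mem L ⟨t, ht⟩)
  simp only [List.get_eq_getElem] at this ⊢
  omega

omit f in
include hsum in
lemma s_le_n (t : ℕ) : (L.take t).sum ≤ n := by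
  conv_rhs => rw [← hsum, ← List.take_append_drop t L]
  rw [List.sum_append]
  omega

omit f in
include hpos hsum in
lemma exists_block (i : Fin n) :
    ∃ t, t < L.length ∧ (L.take t).sum ≤ (i : ℕ) ∧ (i : ℕ) < (L.take (t + 1)).sum := by
  classical
  set P : ℕ → Prop := fun t => (L.take t).sum ≤ (i : ℕ) with hP
  have hP0 : P 0 := by simp [hP]
  have hspec : P (Nat.findGreatest P L.length) :=
    Nat.findGreatest_spec (Nat.zero_le _) hP0
  set t0 := Nat.findGreatest P L.length with ht0
  have hle : t0 ≤ L.length := Nat.findGreatest_le _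
  have htlt : t0 < L.length := by
    rcases lt_or_eq_of_le hle with h | h
    · exact h
    · exfalso
      have : (L.take t0).sum = n := by rw [h, List.take_of_length_le le_rfl, hsum]
      have hi := i.isLt
      simp only [hP] at hspec
      omega
  refine ⟨t0, htlt, hspec, ?_⟩
  have := Nat.findGreatest_is_greatest (lt_add_one t0) (by omega : t0 + 1 ≤ L.length)
  simp only [hP] at this
  omega

/-- The top element of block `t`. -/
def mF (t : Fin L.length) : Fin n :=
  ⟨(L.take ((t : ℕ) + 1)).sum - 1, by
    have h1 := s_strict L hpos t.isLt
    have h2 := s_le_n L hsum ((t : ℕ) + 1)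
    omega⟩

omit f in
include hpos hsum in
lemma mF_block (t : Fin L.length) :
    (L.take (t : ℕ)).sum ≤ (mF L hpos hsum t : ℕ) ∧
      ((mF L hpos hsum t : ℕ)) < (L.take ((t : ℕ) + 1)).sum := by
  have h1 := s_strict L hpos t.isLt
  constructor <;> simp only [mF] <;> omega

include hpos hsum hfl in
lemma f_on_block {i : Fin n} {t : ℕ} (ht : t < L.length)
    (h1 : (L.take t).sum ≤ (i : ℕ)) (h2 : (i : ℕ) < (L.take (t + 1)).sum) :
    f i = mF L hpos hsum ⟨t, ht⟩ := by
  have := hfl t ht i h1 h2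
  exact Fin.ext (by rw [this]; rfl)

include hpos hsum hfl in
lemma f_idem : ∀ i, f (f i) = f i := by
  intro i
  obtain ⟨t, ht, h1, h2⟩ := exists_block L hpos hsum i
  rw [f_on_block L f hpos hsum hfl ht h1 h2]
  obtain ⟨hb1, hb2⟩ := mF_block L hpos hsum ⟨t, ht⟩
  exact f_on_block L f hpos hsum hfl ht hb1 hb2

omit f in
include hpos hsum in
lemma mF_inj : Function.Injective (mF L hpos hsum) := by
  intro t t' h
  have hv : (L.take ((t : ℕ) + 1)).sum - 1 = (L.take ((t' : ℕ) + 1)).sum - 1 :=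
    congrArg Fin.val h
  have h1 := s_strict L hpos t.isLt
  have h1' := s_strict L hpos t'.isLt
  have hsum_eq : (L.take ((t : ℕ) + 1)).sum = (L.take ((t' : ℕ) + 1)).sum := by omega
  by_contra hne
  rcases Nat.lt_or_ge (t : ℕ) (t' : ℕ) with hlt | hge
  · have := s_mono L (show (t : ℕ) + 1 ≤ (t' : ℕ) from hlt)
    have := s_strict L hpos t'.isLt
    omega
  · have hlt' : (t' : ℕ) < (t : ℕ) :=
      lt_of_le_of_ne hge (fun hc => hne (Fin.ext hc.symm))
    have := s_mono L (show (t' : ℕ) + 1 ≤ (t : ℕ) from hlt')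
    have := s_strict L hpos t.isLt
    omega

include hpos hsum hfl in
lemma fiber_card (t : Fin L.length) :
    (Finset.univ.filter (fun i : Fin n => f i = mF L hpos hsum t)).card = L.get t := by
  have hset : Finset.univ.filter (fun i : Fin n => f i = mF L hpos hsum t) =
      Finset.univ.filter (fun i : Fin n =>
        (L.take (t : ℕ)).sum ≤ (i : ℕ) ∧ (i : ℕ) < (L.take ((t : ℕ) + 1)).sum) := by
    ext i
    simp only [Finset.mem_filter, Finset.mem_univ, true_and]
    constructor
    · intro h
      obtain ⟨t', ht', h1, h2⟩ := exists_block L hpos hsum i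
      have := f_on_block L f hpos hsum hfl ht' h1 h2
      rw [this] at h
      have : (⟨t', ht'⟩ : Fin L.length) = t := mF_inj L hpos hsum h
      rw [← this]
      exact ⟨h1, h2⟩
    · intro ⟨h1, h2⟩
      have := f_on_block L f hpos hsum hfl t.isLt h1 h2
      rwa [Fin.eta] at this
  rw [hset]
  have hcard : (Finset.univ.filter (fun i : Fin n =>
      (L.take (t : ℕ)).sum ≤ (i : ℕ) ∧ (i : ℕ) < (L.take ((t : ℕ) + 1)).sum)).card =
      (Finset.Ico ((L.take (t : ℕ)).sum) ((L.take ((t : ℕ) + 1)).sum)).card := by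
    exact Finset.card_bij' (fun i _ => (i : ℕ))
      (fun x hx => (⟨x, by
        simp only [Finset.mem_Ico] at hx
        have := s_le_n L hsum ((t : ℕ) + 1)
        omega⟩ : Fin n))
      (fun a ha => by
        simp only [Finset.mem_filter, Finset.mem_univ, true_and] at ha
        simpa only [Finset.mem_Ico] using ha)
      (fun x hx => by
        simp only [Finset.mem_Ico] at hx
        simp only [Finset.mem_filter, Finset.mem_univ, true_and]
        exact hx)
      (fun a ha => rfl) (fun x hx => rfl)
  rw [hcard, Nat.card_Ico, List.sum_take_succ _ _ t.isLt]
  simp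

include hpos hsum hfl in
lemma fixed_iff (m : Fin n) : f m = m ↔ ∃ t : Fin L.length, mF L hpos hsum t = m := by
  constructor
  · intro h
    obtain ⟨t, ht, h1, h2⟩ := exists_block L hpos hsum m
    exact ⟨⟨t, ht⟩, by rw [← f_on_block L f hpos hsum hfl ht h1 h2, h]⟩
  · rintro ⟨t, rfl⟩
    obtain ⟨h1, h2⟩ := mF_block L hpos hsum t
    have := f_on_block L f hpos hsum hfl t.isLt h1 h2
    rwa [Fin.eta] at this

include hpos hsum hfl in
lemma count_bridge (v : ℕ) :
    (Finset.univ.filter (fun m : Fin n => f m = m ∧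
      (Finset.univ.filter (fun i => f i = m)).card = v)).card = L.count v := by
  have hset : Finset.univ.filter (fun m : Fin n => f m = m ∧
      (Finset.univ.filter (fun i => f i = m)).card = v) =
      (Finset.univ.filter (fun t : Fin L.length => L.get t = v)).image (mF L hpos hsum) := by
    ext m
    simp only [Finset.mem_filter, Finset.mem_univ, true_and, Finset.mem_image]
    constructor
    · rintro ⟨h1, h2⟩
      obtain ⟨t, rfl⟩ := (fixed_iff L f hpos hsum hfl m).mp h1
      refine ⟨t, ?_, rfl⟩
      rw [← fiber_card L f hpos hsum hfl t]
      exact h2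
    · rintro ⟨t, ht, rfl⟩
      refine ⟨(fixed_iff L f hpos hsum hfl _).mpr ⟨t, rfl⟩, ?_⟩
      rw [fiber_card L f hpos hsum hfl t]
      exact ht
  rw [hset, Finset.card_image_of_injective _ (mF_inj L hpos hsum)]
  have huniv : ((Finset.univ : Finset (Fin L.length)).filter (fun t => L.get t = v)).card
      = Multiset.count v (Multiset.map (fun t : Fin L.length => L.get t)
          (Finset.univ : Finset (Fin L.length)).val) := by
    rw [Multiset.count_map, Finset.card_def, Finset.filter_val]
    congr 1
    apply Multiset.filter_congr
    intro x _
    exact ⟨Eq.symm, Eq.symm⟩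
  have hmap : Multiset.map (fun t : Fin L.length => L.get t)
      (Finset.univ : Finset (Fin L.length)).val = (L : Multiset ℕ) := by
    rw [Fin.univ_def]
    change Multiset.map (fun t : Fin L.length => L.get t) ↑(List.finRange L.length)
      = (L : Multiset ℕ)
    rw [Multiset.map_coe, List.map_get_finRange]
  rw [huniv, hmap, Multiset.coe_count]

end Partition

end Stmt18

namespace Stmt18
section Transport

variable {M N : Type*} [Monoid M] [Monoid N]

lemma ltL_transport (g : M ≃ N) (hg : ∀ a b : M, leL a b ↔ leL (g a) (g b)) (a b : M) :
    ltL a b ↔ ltL (g a) (g b) := by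
  unfold ltL
  rw [hg a b, hg b a]

lemma P3_map (g : M ≃ N) (hg : ∀ a b : M, leL a b ↔ leL (g a) (g b)) (q : M) (h : P3 q) :
    P3 (g q) := by
  have hg' : ∀ x y : N, leL x y ↔ leL (g.symm x) (g.symm y) := by
    intro x y
    rw [hg (g.symm x) (g.symm y), g.apply_symm_apply, g.apply_symm_apply]
  obtain ⟨⟨a0, a1, a2, h01, h12, h2q⟩, h4⟩ := h
  refine ⟨⟨g a0, g a1, g a2, (ltL_transport g hg _ _).mp h01,
    (ltL_transport g hg _ _).mp h12, (ltL_transport g hg _ _).mp h2q⟩, ?_⟩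
  rintro ⟨b0, b1, b2, b3, k01, k12, k23, k3q⟩
  have hlt' : ∀ x y : N, ltL x y → ltL (g.symm x) (g.symm y) := by
    intro x y hxy
    exact ⟨(hg' x y).mp hxy.1, fun hc => hxy.2 ((hg' y x).mpr hc)⟩
  refine h4 ⟨g.symm b0, g.symm b1, g.symm b2, g.symm b3, hlt' _ _ k01, hlt' _ _ k12,
    hlt' _ _ k23, ?_⟩
  have := hlt' _ _ k3q
  rwa [g.symm_apply_apply] at this

lemma NL_transport (g : M ≃ N) (hg : ∀ a b : M, leL a b ↔ leL (g a) (g b)) (q : M) :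
    NL (g q) = NL q := by
  have hset : {a : N | leL a (g q)} = g '' {a : M | leL a q} := by
    ext x
    simp only [Set.mem_setOf_eq, Set.mem_image]
    constructor
    · intro hx
      refine ⟨g.symm x, ?_, g.apply_symm_apply x⟩
      rw [hg, g.apply_symm_apply]
      exact hx
    · rintro ⟨a, ha, rfl⟩
      exact (hg a q).mp ha
  rw [NL, NL, hset, Set.ncard_image_of_injective _ g.injective]

lemma count_transport (g : M ≃ N) (hg : ∀ a b : M, leL a b ↔ leL (g a) (g b)) (c : ℕ) :
    {q : M | P3 q ∧ NL q = c}.ncard = {q : N | P3 q ∧ NL q = c}.ncard := by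
  have hg' : ∀ x y : N, leL x y ↔ leL (g.symm x) (g.symm y) := by
    intro x y
    rw [hg (g.symm x) (g.symm y), g.apply_symm_apply, g.apply_symm_apply]
  have hset : {q : N | P3 q ∧ NL q = c} = g '' {q : M | P3 q ∧ NL q = c} := by
    ext x
    simp only [Set.mem_setOf_eq, Set.mem_image]
    constructor
    · rintro ⟨h1, h2⟩
      refine ⟨g.symm x, ⟨P3_map g.symm hg' x h1, ?_⟩, g.apply_symm_apply x⟩
      rw [NL_transport g.symm hg' x]
      exact h2
    · rintro ⟨a, ⟨h1, h2⟩, rfl⟩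
      exact ⟨P3_map g hg a h1, by rw [NL_transport g hg a]; exact h2⟩
  rw [hset, Set.ncard_image_of_injective _ g.injective]

end Transport
end Stmt18


open Stmt18 in
/-- For two distinct partitions `λ, ν ⊢ n`, the posets `(M(f_λ), ≤_L)` and
`(M(f_ν), ≤_L)` are not isomorphic. -/
theorem stmt18 (n : ℕ) (hn : 2 ≤ n) (lam nu : List ℕ) (hne : lam ≠ nu)
    (hposl : ∀ a ∈ lam, 0 < a) (hsuml : lam.sum = n) (hsortl : lam.Pairwise (· ≥ ·))
    (hposn : ∀ a ∈ nu, 0 < a) (hsumn : nu.sum = n) (hsortn : nu.Pairwise (· ≥ ·))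
    (flam fnu : Fin n → Fin n)
    (hflam : ∀ (t : ℕ), t < lam.length → ∀ i : Fin n,
      (lam.take t).sum ≤ (i : ℕ) → (i : ℕ) < (lam.take (t + 1)).sum →
      ((flam i : ℕ) = (lam.take (t + 1)).sum - 1))
    (hfnu : ∀ (t : ℕ), t < nu.length → ∀ i : Fin n,
      (nu.take t).sum ≤ (i : ℕ) → (i : ℕ) < (nu.take (t + 1)).sum →
      ((fnu i : ℕ) = (nu.take (t + 1)).sum - 1))
    (cl cn : Con (FreeMonoid (Fin n)))
    (hcl : cl = conGen fun u v => ∃ i j : Fin n,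
      u = FreeMonoid.of i * FreeMonoid.of (flam i) ∧
      v = FreeMonoid.of j * FreeMonoid.of (flam j))
    (hcn : cn = conGen fun u v => ∃ i j : Fin n,
      u = FreeMonoid.of i * FreeMonoid.of (fnu i) ∧
      v = FreeMonoid.of j * FreeMonoid.of (fnu j)) :
    ¬ ∃ g : cl.Quotient ≃ cn.Quotient, ∀ a b : cl.Quotient,
      leL a b ↔ leL (g a) (g b) := by
  rintro ⟨g, hg⟩
  have hz : 0 < n := by omega
  set z : Fin n := ⟨0, hz⟩ with hzdef
  have hcl' : cl = conGen (R flam) := hcl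
  have hcn' : cn = conGen (R fnu) := hcn
  have hfL : ∀ i, flam (flam i) = flam i := f_idem lam flam hposl hsuml hflam
  have hfN : ∀ i, fnu (fnu i) = fnu i := f_idem nu fnu hposn hsumn hfnu
  have hcount : ∀ v : ℕ, lam.count v = nu.count v := by
    intro v
    rcases Nat.eq_zero_or_pos v with rfl | hv
    · rw [List.count_eq_zero_of_not_mem (fun h => absurd (hposl 0 h) (lt_irrefl 0)),
        List.count_eq_zero_of_not_mem (fun h => absurd (hposn 0 h) (lt_irrefl 0))]
    · have h1 := count_main cl flam z hcl' hfL hn v hv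
      have h2 := count_main cn fnu z hcn' hfN hn v hv
      have h3 := count_transport g hg (v * (n - 1) + (n + 3))
      rw [← count_bridge lam flam hposl hsuml hflam v,
        ← count_bridge nu fnu hposn hsumn hfnu v, ← h1, ← h2]
      exact h3
  have hperm : lam.Perm nu := List.perm_iff_count.mpr hcount
  exact hne (List.Perm.eq_of_pairwise (fun a b _ _ h1 h2 => le_antisymm h2 h1) hsortl hsortn hperm)
end
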